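/- Let H = (V, E) be a finite simple graph and let k ≥ 3 be an odd integer. In the min-based reduction instance built from (H, k), under min-EQ utilities, the coalition structure Γ is not core-stable if and only if H contains a clique of size k. -/

import Mathlib

open Finset
open scoped Classical

section AHGDefs

variable {N : Type*} [Fintype N] [DecidableEq N]

/-- The set of friends of player `i` inside coalition `C`. -/
noncomputable def friendsIn (G : SimpleGraph N) (C : Finset N) (i : N) : Finset N :=
  C.filter fun j => G.Adj i j

/-- The friend-oriented valuation of coalition `C` by player `i`:
`val_i(C) = n·|F_i ∩ C| − |E_i ∩ C|`. -/
noncomputable def fval (G : SimpleGraph N) (C : Finset N) (i : N) : ℤ :=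
  (Fintype.card N : ℤ) * ((friendsIn G C i).card : ℤ)
    - ((C.filter fun j => ¬ G.Adj i j ∧ j ≠ i).card : ℤ)

/-- Average-based equal-treatment utility. -/
noncomputable def utilAvgEQ (G : SimpleGraph N) (C : Finset N) (i : N) : ℚ :=
  (∑ c ∈ insert i (friendsIn G C i), (fval G C c : ℚ)) /
    ((insert i (friendsIn G C i)).card : ℚ)

/-- Average-based altruistic-treatment utility with weight `w`. -/
noncomputable def utilAvgAL (G : SimpleGraph N) (w : ℚ) (C : Finset N) (i : N) : ℚ :=
  (fval G C i : ℚ) +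
    w * (if (friendsIn G C i).Nonempty then
          (∑ c ∈ friendsIn G C i, (fval G C c : ℚ)) / ((friendsIn G C i).card : ℚ)
         else 0)

/-- Min-based equal-treatment utility. -/
noncomputable def utilMinEQ (G : SimpleGraph N) (C : Finset N) (i : N) : ℤ :=
  (insert i (friendsIn G C i)).inf' (insert_nonempty _ _) (fval G C)

/-- Min-based altruistic-treatment utility with weight `w`. -/
noncomputable def utilMinAL (G : SimpleGraph N) (w : ℤ) (C : Finset N) (i : N) : ℤ :=
  fval G C i +
    w * (if h : (friendsIn G C i).Nonempty then (friendsIn G C i).inf' h (fval G C) else 0)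

/-- A coalition structure (partition of the players), given as the map sending
each player to its coalition. -/
structure CoalitionStructure (N : Type*) [Fintype N] [DecidableEq N] where
  part : N → Finset N
  mem_part : ∀ i, i ∈ part i
  part_eq : ∀ i j, j ∈ part i → part j = part i

/-- A (nonempty) coalition `C` blocks the coalition structure `Γ`. -/
def Blocks {α : Type*} [LT α] (util : Finset N → N → α) (Γ : CoalitionStructure N)
    (C : Finset N) : Prop :=
  C.Nonempty ∧ ∀ i ∈ C, util (Γ.part i) i < util C i

/-- Core stability: no nonempty coalition blocks `Γ`. -/
def CoreStable {α : Type*} [LT α] (util : Finset N → N → α)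
    (Γ : CoalitionStructure N) : Prop :=
  ¬ ∃ C : Finset N, Blocks util Γ C

/-- Cyclic distance between two positions on a cycle of length `k'`. -/
def cycDist (k' : ℕ) (a b : Fin k') : ℕ :=
  min ((a.val + k' - b.val) % k') ((b.val + k' - a.val) % k')

/-- `P` carries an `(r,k')`-circulant gadget of `G`: its `k'` players are arranged
along a cycle of length `k'`, and two players are adjacent iff their distance along
the cycle is at most `r/2` (so each player has `r` friends in the gadget). -/
def IsCirculantGadget (G : SimpleGraph N) (r k' : ℕ) (P : Finset N) : Prop :=
  ∃ f : Fin k' → N, Function.Injective f ∧ Finset.univ.image f = P ∧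
    ∀ a b : Fin k', (G.Adj (f a) (f b) ↔ (a ≠ b ∧ cycDist k' a b ≤ r / 2))

/-- The gadget size `k' = k·(k choose 2) + k + 1` of the min-based reduction. -/
def minK' (k : ℕ) : ℕ := k * Nat.choose k 2 + k + 1

variable {V : Type*} [Fintype V] [DecidableEq V]

/-- The min-based reduction instance built from the graph `H` and an odd `k ≥ 3`:
`G` is the constructed network of friends on the player set `N`; `Pv v`, `Pe e`, and
`Pve v e` are the player sets of the `(k−1,k')`-circulant vertex, edge, and incidence
gadgets with distinguished players `vp v`, `ep e`, and `bp v e` respectively; `Ae e`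
are the `k−3` dummy players of edge `e`, forming a clique. Each `bp v e` is further
adjacent to `vp v` and `ep e`, each dummy in `Ae e` to `ep e` and to both incidence
players of `e`, and there are no other edges. -/
structure MinReduction (H : SimpleGraph V) (k : ℕ) (G : SimpleGraph N)
    (Pv : V → Finset N) (Pe : Sym2 V → Finset N) (Pve : V → Sym2 V → Finset N)
    (Ae : Sym2 V → Finset N) (vp : V → N) (ep : Sym2 V → N) (bp : V → Sym2 V → N) :
    Prop where
  circ_v : ∀ v : V, IsCirculantGadget G (k - 1) (minK' k) (Pv v)
  circ_e : ∀ e ∈ H.edgeSet, IsCirculantGadget G (k - 1) (minK' k) (Pe e)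
  circ_ve : ∀ (v : V), ∀ e ∈ H.edgeSet, v ∈ e →
    IsCirculantGadget G (k - 1) (minK' k) (Pve v e)
  vp_mem : ∀ v : V, vp v ∈ Pv v
  ep_mem : ∀ e ∈ H.edgeSet, ep e ∈ Pe e
  bp_mem : ∀ (v : V), ∀ e ∈ H.edgeSet, v ∈ e → bp v e ∈ Pve v e
  Ae_card : ∀ e ∈ H.edgeSet, (Ae e).card = k - 3
  Ae_clique : ∀ e ∈ H.edgeSet, ∀ a ∈ Ae e, ∀ b ∈ Ae e, a ≠ b → G.Adj a b
  disj_vv : ∀ v w : V, v ≠ w → Disjoint (Pv v) (Pv w)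
  disj_ee : ∀ e ∈ H.edgeSet, ∀ f ∈ H.edgeSet, e ≠ f → Disjoint (Pe e) (Pe f)
  disj_bb : ∀ (v : V), ∀ e ∈ H.edgeSet, v ∈ e → ∀ (w : V), ∀ f ∈ H.edgeSet, w ∈ f →
    (v, e) ≠ (w, f) → Disjoint (Pve v e) (Pve w f)
  disj_aa : ∀ e ∈ H.edgeSet, ∀ f ∈ H.edgeSet, e ≠ f → Disjoint (Ae e) (Ae f)
  disj_v_e : ∀ (v : V), ∀ e ∈ H.edgeSet, Disjoint (Pv v) (Pe e)
  disj_v_b : ∀ (v w : V), ∀ f ∈ H.edgeSet, w ∈ f → Disjoint (Pv v) (Pve w f)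
  disj_v_a : ∀ (v : V), ∀ e ∈ H.edgeSet, Disjoint (Pv v) (Ae e)
  disj_e_b : ∀ e ∈ H.edgeSet, ∀ (w : V), ∀ f ∈ H.edgeSet, w ∈ f →
    Disjoint (Pe e) (Pve w f)
  disj_e_a : ∀ e ∈ H.edgeSet, ∀ f ∈ H.edgeSet, Disjoint (Pe e) (Ae f)
  disj_b_a : ∀ (v : V), ∀ e ∈ H.edgeSet, v ∈ e → ∀ f ∈ H.edgeSet,
    Disjoint (Pve v e) (Ae f)
  cover : ∀ x : N, (∃ v : V, x ∈ Pv v) ∨ (∃ e ∈ H.edgeSet, x ∈ Pe e) ∨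
    (∃ (v : V), ∃ e ∈ H.edgeSet, v ∈ e ∧ x ∈ Pve v e) ∨ (∃ e ∈ H.edgeSet, x ∈ Ae e)
  adj_bv : ∀ (v : V), ∀ e ∈ H.edgeSet, v ∈ e → G.Adj (bp v e) (vp v)
  adj_be : ∀ (v : V), ∀ e ∈ H.edgeSet, v ∈ e → G.Adj (bp v e) (ep e)
  adj_ae : ∀ e ∈ H.edgeSet, ∀ a ∈ Ae e, G.Adj a (ep e)
  adj_ab : ∀ (v : V), ∀ e ∈ H.edgeSet, v ∈ e → ∀ a ∈ Ae e, G.Adj a (bp v e)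
  adj_cases : ∀ x y : N, G.Adj x y →
    (∃ v : V, x ∈ Pv v ∧ y ∈ Pv v) ∨
    (∃ e ∈ H.edgeSet, x ∈ Pe e ∧ y ∈ Pe e) ∨
    (∃ (v : V), ∃ e ∈ H.edgeSet, v ∈ e ∧ x ∈ Pve v e ∧ y ∈ Pve v e) ∨
    (∃ e ∈ H.edgeSet, x ∈ Ae e ∧ y ∈ Ae e) ∨
    (∃ (v : V), ∃ e ∈ H.edgeSet, v ∈ e ∧
      ((x = bp v e ∧ y = vp v) ∨ (y = bp v e ∧ x = vp v))) ∨
    (∃ (v : V), ∃ e ∈ H.edgeSet, v ∈ e ∧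
      ((x = bp v e ∧ y = ep e) ∨ (y = bp v e ∧ x = ep e))) ∨
    (∃ e ∈ H.edgeSet, (x ∈ Ae e ∧ y = ep e) ∨ (y ∈ Ae e ∧ x = ep e)) ∨
    (∃ (v : V), ∃ e ∈ H.edgeSet, v ∈ e ∧
      ((x ∈ Ae e ∧ y = bp v e) ∨ (y ∈ Ae e ∧ x = bp v e)))

/-- `Γ` is the coalition structure of the min-based reduction instance: its coalitions
are exactly the gadget player sets and the dummy sets. -/
def IsMinGamma (H : SimpleGraph V) (Pv : V → Finset N) (Pe : Sym2 V → Finset N)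
    (Pve : V → Sym2 V → Finset N) (Ae : Sym2 V → Finset N)
    (Γ : CoalitionStructure N) : Prop :=
  (∀ v : V, ∀ i ∈ Pv v, Γ.part i = Pv v) ∧
  (∀ e ∈ H.edgeSet, ∀ i ∈ Pe e, Γ.part i = Pe e) ∧
  (∀ (v : V), ∀ e ∈ H.edgeSet, v ∈ e → ∀ i ∈ Pve v e, Γ.part i = Pve v e) ∧
  (∀ e ∈ H.edgeSet, ∀ i ∈ Ae e, Γ.part i = Ae e)
end AHGDefs

set_option linter.unusedSectionVars false
set_option linter.unusedVariables false
set_option maxHeartbeats 1000000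

section Helpers
variable {N : Type*} [Fintype N] [DecidableEq N]

lemma AHG_friendsIn_subset (G : SimpleGraph N) (C : Finset N) (x : N) :
    friendsIn G C x ⊆ C := filter_subset _ _

lemma AHG_card_split (G : SimpleGraph N) (C : Finset N) (x : N) (hx : x ∈ C) :
    (C.filter fun j => ¬ G.Adj x j ∧ j ≠ x).card + (friendsIn G C x).card + 1 = C.card := by
  have h1 : (C.filter fun j => G.Adj x j).card + (C.filter fun j => ¬ G.Adj x j).card = C.card :=
    Finset.card_filter_add_card_filter_not _
  have h2 : (C.filter fun j => ¬ G.Adj x j)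
      = insert x (C.filter fun j => ¬ G.Adj x j ∧ j ≠ x) := by
    ext y
    simp only [Finset.mem_insert, Finset.mem_filter]
    constructor
    · rintro ⟨hy, hn⟩
      by_cases hxy : y = x
      · exact Or.inl hxy
      · exact Or.inr ⟨hy, hn, hxy⟩
    · intro h
      rcases h with h | ⟨hy, hn, _⟩
      · subst h
        exact ⟨hx, fun h => G.irrefl h⟩
      · exact ⟨hy, hn⟩
  have hxnot : x ∉ (C.filter fun j => ¬ G.Adj x j ∧ j ≠ x) := by
    simp [Finset.mem_filter]
  have h3 : (C.filter fun j => ¬ G.Adj x j).card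
      = (C.filter fun j => ¬ G.Adj x j ∧ j ≠ x).card + 1 := by
    rw [h2, Finset.card_insert_of_notMem hxnot]
  unfold friendsIn
  omega

lemma AHG_fval_eq (G : SimpleGraph N) (C : Finset N) (x : N) (hx : x ∈ C) :
    fval G C x = ((Fintype.card N : ℤ) + 1) * ((friendsIn G C x).card : ℤ)
      - ((C.card : ℤ) - 1) := by
  have h := AHG_card_split G C x hx
  have h' : ((C.filter fun j => ¬ G.Adj x j ∧ j ≠ x).card : ℤ)
      = (C.card : ℤ) - 1 - ((friendsIn G C x).card : ℤ) := by
    have := congrArg (fun t : ℕ => (t : ℤ)) h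
    push_cast at this
    linarith
  unfold fval
  rw [h']
  ring

lemma AHG_friends_card_le (G : SimpleGraph N) (C : Finset N) (x : N) (hx : x ∈ C) :
    (friendsIn G C x).card + 1 ≤ C.card := by
  have h := AHG_card_split G C x hx
  omega

lemma AHG_utilMinEQ_le (G : SimpleGraph N) (C : Finset N) (i : N) :
    utilMinEQ G C i ≤ fval G C i :=
  Finset.inf'_le _ (Finset.mem_insert_self _ _)

lemma AHG_lt_utilMinEQ_iff (G : SimpleGraph N) (C : Finset N) (i : N) (t : ℤ) :
    t < utilMinEQ G C i ↔ ∀ c ∈ insert i (friendsIn G C i), t < fval G C c :=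
  Finset.lt_inf'_iff _

lemma AHG_utilMinEQ_const (G : SimpleGraph N) (C : Finset N) (i : N) (t : ℤ)
    (h : ∀ c ∈ insert i (friendsIn G C i), fval G C c = t) :
    utilMinEQ G C i = t := by
  apply le_antisymm
  · exact le_of_le_of_eq (AHG_utilMinEQ_le G C i) (h i (Finset.mem_insert_self _ _))
  · exact Finset.le_inf' _ _ fun c hc => le_of_eq (h c hc).symm

lemma AHG_mod2 {x m : ℕ} (hm : 0 < m) (h : x < 2 * m) :
    x % m = if x < m then x else x - m := by
  split_ifs with h1
  · exact Nat.mod_eq_of_lt h1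
  · rw [Nat.mod_eq_sub_mod (le_of_not_gt h1), Nat.mod_eq_of_lt (by omega)]

lemma AHG_cycDist_comm (k' : ℕ) (a b : Fin k') : cycDist k' a b = cycDist k' b a := by
  unfold cycDist; exact min_comm _ _

lemma AHG_cycDist_add {k' : ℕ} (a j : Fin k') :
    cycDist k' a (a + j) = min ((k' - j.val) % k') (j.val) := by
  have hk' : 0 < k' := a.pos
  unfold cycDist
  rw [Fin.add_def]
  simp only []
  rcases Nat.lt_or_ge (a.val + j.val) k' with h | h
  · have e1 : (a.val + j.val) % k' = a.val + j.val := Nat.mod_eq_of_lt h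
    rw [e1]
    have e2 : a.val + k' - (a.val + j.val) = k' - j.val := by omega
    have e3 : (a.val + j.val + k' - a.val) % k' = j.val := by
      have h4 : a.val + j.val + k' - a.val = j.val + k' := by omega
      rw [h4, Nat.add_mod_right, Nat.mod_eq_of_lt j.isLt]
    rw [e2, e3]
  · have e1 : (a.val + j.val) % k' = a.val + j.val - k' := by
      rw [Nat.mod_eq_sub_mod h, Nat.mod_eq_of_lt (by omega)]
    rw [e1]
    have hJ1 : 1 ≤ j.val := by omega
    have e2 : a.val + k' - (a.val + j.val - k') = k' + (k' - j.val) := by omega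
    have e3 : (k' + (k' - j.val)) % k' = (k' - j.val) % k' := by
      rw [Nat.add_comm, Nat.add_mod_right]
    have e4 : (a.val + j.val - k' + k' - a.val) % k' = j.val := by
      have h4 : a.val + j.val - k' + k' - a.val = j.val := by omega
      rw [h4, Nat.mod_eq_of_lt j.isLt]
    rw [e2, e3, e4]

lemma AHG_cycDist_add_ne {k' : ℕ} (a : Fin k') {j : Fin k'} (hj : 1 ≤ j.val) :
    cycDist k' a (a + j) = min (k' - j.val) (j.val) := by
  rw [AHG_cycDist_add]
  have h2 : j.val < k' := j.isLt
  rw [Nat.mod_eq_of_lt (by omega)]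

open Fin.NatCast in
lemma AHG_circ_count {k' d : ℕ} (hd : 1 ≤ d) (hk' : 2 * d + 1 < k') (a : Fin k') :
    ((univ : Finset (Fin k')).filter fun b => a ≠ b ∧ cycDist k' a b ≤ d).card = 2 * d := by
  haveI : NeZero k' := ⟨by omega⟩
  have hJcard : ((Finset.Icc 1 d) ∪ (Finset.Icc (k' - d) (k' - 1))).card = 2 * d := by
    rw [Finset.card_union_of_disjoint]
    · rw [Nat.card_Icc, Nat.card_Icc]; omega
    · rw [Finset.disjoint_left]
      intro t ht1 ht2
      rw [Finset.mem_Icc] at ht1 ht2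
      omega
  rw [← hJcard]
  apply Finset.card_bij' (i := fun b _ => (b - a).val)
    (j := fun t _ => a + (t : Fin k'))
  · intro b hb
    rw [Finset.mem_filter] at hb
    obtain ⟨-, hne, hcd⟩ := hb
    have hb' : b = a + (b - a) := by rw [add_comm, sub_add_cancel]
    have hne' : b - a ≠ 0 := sub_ne_zero.mpr (Ne.symm hne)
    have h1 : 1 ≤ (b - a).val := by
      rcases Nat.eq_zero_or_pos (b - a).val with h | h
      · exact absurd (Fin.ext h : b - a = 0) hne'
      · exact h
    rw [hb', AHG_cycDist_add_ne a h1] at hcd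
    have h2 : (b - a).val < k' := (b - a).isLt
    simp only [Finset.mem_union, Finset.mem_Icc]
    omega
  · intro t ht
    simp only [Finset.mem_union, Finset.mem_Icc] at ht
    have htlt : t < k' := by omega
    have ht1 : 1 ≤ t := by omega
    have hval : ((t : Fin k')).val = t := by
      rw [Fin.val_natCast, Nat.mod_eq_of_lt htlt]
    have hne0 : 1 ≤ ((t : Fin k')).val := by rw [hval]; omega
    rw [Finset.mem_filter]
    refine ⟨Finset.mem_univ _, ?_, ?_⟩
    · intro h
      have h2 : ((t : Fin k')).val = ((0 : Fin k')).val := by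
        have h3 : (t : Fin k') = 0 := by
          have := congrArg (fun z => z - a) h
          simpa using this.symm
        rw [h3]
      simp [hval] at h2
      omega
    · rw [AHG_cycDist_add_ne a hne0, hval]
      omega
  · intro b _
    rw [Fin.cast_val_eq_self, add_comm, sub_add_cancel]
  · intro t ht
    simp only [Finset.mem_union, Finset.mem_Icc] at ht
    have htlt : t < k' := by omega
    rw [add_sub_cancel_left, Fin.val_natCast, Nat.mod_eq_of_lt htlt]

end Helpers



section Gadget
variable {N : Type*} [Fintype N] [DecidableEq N]

lemma AHG_gadget_card {G : SimpleGraph N} {r k' : ℕ} {P : Finset N}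
    (h : IsCirculantGadget G r k' P) : P.card = k' := by
  obtain ⟨f, hinj, himg, -⟩ := h
  rw [← himg, Finset.card_image_of_injective _ hinj, Finset.card_univ, Fintype.card_fin]

lemma AHG_gadget_card_le {G : SimpleGraph N} {r k' : ℕ} {P : Finset N}
    (h : IsCirculantGadget G r k' P) : k' ≤ Fintype.card N := by
  rw [← AHG_gadget_card h]; exact Finset.card_le_univ P

lemma AHG_gadget_friends {G : SimpleGraph N} {k k' : ℕ} {P : Finset N}
    (hk : 3 ≤ k) (hodd : Odd k) (hk' : k + 1 ≤ k')
    (h : IsCirculantGadget G (k - 1) k' P) {x : N} (hx : x ∈ P) :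
    (friendsIn G P x).card = k - 1 := by
  obtain ⟨f, hinj, himg, hadj⟩ := h
  obtain ⟨d, hd⟩ : ∃ d, k = 2 * d + 1 := by
    obtain ⟨m, hm⟩ := hodd; exact ⟨m, by omega⟩
  have hd2 : (k - 1) / 2 = d := by omega
  obtain ⟨a, -, rfl⟩ : ∃ a, a ∈ (univ : Finset (Fin k')) ∧ f a = x := by
    rw [← himg] at hx; simpa using Finset.mem_image.mp hx
  have himg' : friendsIn G P (f a)
      = ((univ : Finset (Fin k')).filter fun b => a ≠ b ∧ cycDist k' a b ≤ d).image f := by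
    ext y
    unfold friendsIn
    simp only [Finset.mem_filter, Finset.mem_image, Finset.mem_univ, true_and]
    constructor
    · rintro ⟨hyP, hadjy⟩
      rw [← himg] at hyP
      obtain ⟨b, -, rfl⟩ := Finset.mem_image.mp hyP
      refine ⟨b, ?_, rfl⟩
      rw [hadj, hd2] at hadjy
      exact hadjy
    · rintro ⟨b, hb, rfl⟩
      constructor
      · rw [← himg]; exact Finset.mem_image.mpr ⟨b, Finset.mem_univ _, rfl⟩
      · rw [hadj, hd2]; exact hb
  rw [himg', Finset.card_image_of_injective _ hinj,
    AHG_circ_count (by omega) (by omega) a]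
  omega

lemma AHG_gadget_fval {G : SimpleGraph N} {k k' : ℕ} {P : Finset N}
    (hk : 3 ≤ k) (hodd : Odd k) (hk' : k + 1 ≤ k')
    (h : IsCirculantGadget G (k - 1) k' P) {x : N} (hx : x ∈ P) :
    fval G P x = ((Fintype.card N : ℤ) + 1) * ((k : ℤ) - 1) - ((k' : ℤ) - 1) := by
  rw [AHG_fval_eq G P x hx, AHG_gadget_friends hk hodd hk' h hx, AHG_gadget_card h]
  have h1 : ((k - 1 : ℕ) : ℤ) = (k : ℤ) - 1 := by omega
  rw [h1]

lemma AHG_gadget_util {G : SimpleGraph N} {k k' : ℕ} {P : Finset N}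
    (hk : 3 ≤ k) (hodd : Odd k) (hk' : k + 1 ≤ k')
    (h : IsCirculantGadget G (k - 1) k' P) {x : N} (hx : x ∈ P) :
    utilMinEQ G P x = ((Fintype.card N : ℤ) + 1) * ((k : ℤ) - 1) - ((k' : ℤ) - 1) := by
  apply AHG_utilMinEQ_const
  intro c hc
  rcases Finset.mem_insert.mp hc with rfl | hc
  · exact AHG_gadget_fval hk hodd hk' h hx
  · exact AHG_gadget_fval hk hodd hk' h (AHG_friendsIn_subset G P x hc)

end Gadget

section Helpers2
variable {N : Type*} [Fintype N] [DecidableEq N]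

lemma AHG_block_core {G : SimpleGraph N} {Γ : CoalitionStructure N} {C : Finset N}
    (hB : Blocks (utilMinEQ G) Γ C) {i : N} (hi : i ∈ C) {t : ℤ}
    (hu : utilMinEQ G (Γ.part i) i = t) :
    ∀ c ∈ insert i (friendsIn G C i), t < fval G C c := by
  have h := hB.2 i hi
  rw [hu] at h
  exact (Finset.lt_inf'_iff _).mp h

lemma AHG_card_C_le {C : Finset N} : (C.card : ℤ) ≤ (Fintype.card N : ℤ) := by
  exact_mod_cast Finset.card_le_univ C

lemma AHG_fge {G : SimpleGraph N} {C : Finset N} {c : N} {k k' : ℕ}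
    (hc : c ∈ C) (hk : 3 ≤ k) (hn : k' ≤ Fintype.card N)
    (h : ((Fintype.card N : ℤ) + 1) * ((k : ℤ) - 1) - ((k' : ℤ) - 1) < fval G C c) :
    k - 1 ≤ (friendsIn G C c).card := by
  rw [AHG_fval_eq G C c hc] at h
  by_contra hlt
  push_neg at hlt
  set nn : ℤ := (Fintype.card N : ℤ) with hnn'
  set F : ℤ := ((friendsIn G C c).card : ℤ) with hF'
  have hF2 : F ≤ (k : ℤ) - 2 := by
    have h3 : (friendsIn G C c).card + 2 ≤ k := by omega
    rw [hF']
    omega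
  have hF1 : F + 1 ≤ (C.card : ℤ) := by
    have h3 := AHG_friends_card_le G C c hc
    rw [hF']
    omega
  have hnn : (k' : ℤ) ≤ nn := by rw [hnn']; exact_mod_cast hn
  have e0 : (nn + 1) * F = nn * F + F := by ring
  have e2 : nn * F ≤ nn * ((k : ℤ) - 2) :=
    mul_le_mul_of_nonneg_left hF2 (by rw [hnn']; positivity)
  have e3 : (nn + 1) * ((k : ℤ) - 1) = nn * ((k : ℤ) - 2) + nn + ((k : ℤ) - 1) := by ring
  have hkc : (3 : ℤ) ≤ (k : ℤ) := by exact_mod_cast hk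
  linarith

lemma AHG_cle {G : SimpleGraph N} {C : Finset N} {c : N} {k k' : ℕ}
    (hc : c ∈ C) (hk : 3 ≤ k) (hk' : 1 ≤ k')
    (hF : (friendsIn G C c).card ≤ k - 1)
    (h : ((Fintype.card N : ℤ) + 1) * ((k : ℤ) - 1) - ((k' : ℤ) - 1) < fval G C c) :
    C.card ≤ k' - 1 := by
  rw [AHG_fval_eq G C c hc] at h
  set nn : ℤ := (Fintype.card N : ℤ) with hnn'
  have hF2 : ((friendsIn G C c).card : ℤ) ≤ (k : ℤ) - 1 := by
    have h2 : (friendsIn G C c).card + 1 ≤ k := by omega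
    omega
  have e2 : (nn + 1) * ((friendsIn G C c).card : ℤ) ≤ (nn + 1) * ((k : ℤ) - 1) :=
    mul_le_mul_of_nonneg_left hF2 (by rw [hnn']; positivity)
  have hfin : (C.card : ℤ) < (k' : ℤ) := by linarith
  have : C.card < k' := by exact_mod_cast hfin
  omega

lemma AHG_clique_friends {G : SimpleGraph N} {A : Finset N}
    (hcl : ∀ a ∈ A, ∀ b ∈ A, a ≠ b → G.Adj a b) {a : N} (ha : a ∈ A) :
    friendsIn G A a = A.erase a := by
  ext y
  unfold friendsIn
  simp only [Finset.mem_filter, Finset.mem_erase]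
  constructor
  · rintro ⟨hy, hadj⟩
    exact ⟨hadj.ne', hy⟩
  · rintro ⟨hne, hy⟩
    exact ⟨hy, hcl a ha y hy (fun h => hne h.symm)⟩

lemma AHG_clique_util {G : SimpleGraph N} {A : Finset N}
    (hcl : ∀ a ∈ A, ∀ b ∈ A, a ≠ b → G.Adj a b) {a : N} (ha : a ∈ A) :
    utilMinEQ G A a = (Fintype.card N : ℤ) * ((A.card : ℤ) - 1) := by
  apply AHG_utilMinEQ_const
  intro c hc
  have hcA : c ∈ A := by
    rcases Finset.mem_insert.mp hc with rfl | hc'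
    · exact ha
    · exact AHG_friendsIn_subset G A a hc'
  rw [AHG_fval_eq G A c hcA, AHG_clique_friends hcl hcA, Finset.card_erase_of_mem hcA]
  have h1 : 1 ≤ A.card := Finset.card_pos.mpr ⟨a, ha⟩
  have h2 : ((A.card - 1 : ℕ) : ℤ) = (A.card : ℤ) - 1 := by omega
  rw [h2]
  ring

lemma AHG_val_neg {k' : ℕ} [NeZero k'] (j : Fin k') (hj : 1 ≤ j.val) :
    (-j).val = k' - j.val := by
  have hpos : 0 < k' := j.pos
  have h0 : (j + (-j)).val = 0 := by rw [add_neg_cancel]; rfl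
  rw [Fin.val_add] at h0
  have hb := (-j).isLt
  have hq := j.isLt
  have hm := AHG_mod2 hpos (show j.val + (-j).val < 2 * k' by omega)
  rw [hm] at h0
  split_ifs at h0 <;> omega

end Helpers2

section Structure
variable {V N : Type*} [Fintype V] [DecidableEq V] [Fintype N] [DecidableEq N]
variable {H : SimpleGraph V} {k : ℕ} {G : SimpleGraph N}
variable {Pv : V → Finset N} {Pe : Sym2 V → Finset N} {Pve : V → Sym2 V → Finset N}
variable {Ae : Sym2 V → Finset N} {vp : V → N} {ep : Sym2 V → N} {bp : V → Sym2 V → N}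
variable (R : MinReduction H k G Pv Pe Pve Ae vp ep bp)
include R

lemma RPv_eq {x : N} {v w : V} (h1 : x ∈ Pv v) (h2 : x ∈ Pv w) : v = w := by
  by_contra hne
  exact Finset.disjoint_left.mp (R.disj_vv v w hne) h1 h2

lemma RPe_eq {x : N} {e f : Sym2 V} (he : e ∈ H.edgeSet) (hf : f ∈ H.edgeSet)
    (h1 : x ∈ Pe e) (h2 : x ∈ Pe f) : e = f := by
  by_contra hne
  exact Finset.disjoint_left.mp (R.disj_ee e he f hf hne) h1 h2

lemma RPve_eq {x : N} {v w : V} {e f : Sym2 V} (he : e ∈ H.edgeSet) (hve : v ∈ e)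
    (hf : f ∈ H.edgeSet) (hwf : w ∈ f)
    (h1 : x ∈ Pve v e) (h2 : x ∈ Pve w f) : v = w ∧ e = f := by
  by_contra hne
  have hne' : (v, e) ≠ (w, f) := by
    intro h; injection h with h1' h2'; exact hne ⟨h1', h2'⟩
  exact Finset.disjoint_left.mp (R.disj_bb v e he hve w f hf hwf hne') h1 h2

lemma RAe_eq {x : N} {e f : Sym2 V} (he : e ∈ H.edgeSet) (hf : f ∈ H.edgeSet)
    (h1 : x ∈ Ae e) (h2 : x ∈ Ae f) : e = f := by
  by_contra hne
  exact Finset.disjoint_left.mp (R.disj_aa e he f hf hne) h1 h2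

lemma Rvp_inj {v w : V} (h : vp v = vp w) : v = w :=
  RPv_eq R (R.vp_mem v) (h ▸ R.vp_mem w)

lemma Rep_inj {e f : Sym2 V} (he : e ∈ H.edgeSet) (hf : f ∈ H.edgeSet)
    (h : ep e = ep f) : e = f :=
  RPe_eq R he hf (R.ep_mem e he) (h ▸ R.ep_mem f hf)

lemma Rbp_inj {v w : V} {e f : Sym2 V} (he : e ∈ H.edgeSet) (hve : v ∈ e)
    (hf : f ∈ H.edgeSet) (hwf : w ∈ f) (h : bp v e = bp w f) : v = w ∧ e = f :=
  RPve_eq R he hve hf hwf (R.bp_mem v e he hve) (h ▸ R.bp_mem w f hf hwf)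

lemma Rvp_ne_ep {v : V} {e : Sym2 V} (he : e ∈ H.edgeSet) : vp v ≠ ep e := by
  intro h
  exact Finset.disjoint_left.mp (R.disj_v_e v e he) (R.vp_mem v) (h ▸ R.ep_mem e he)

lemma Rvp_ne_bp {v w : V} {f : Sym2 V} (hf : f ∈ H.edgeSet) (hwf : w ∈ f) :
    vp v ≠ bp w f := by
  intro h
  exact Finset.disjoint_left.mp (R.disj_v_b v w f hf hwf) (R.vp_mem v)
    (h ▸ R.bp_mem w f hf hwf)

lemma Rep_ne_bp {w : V} {e f : Sym2 V} (he : e ∈ H.edgeSet) (hf : f ∈ H.edgeSet)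
    (hwf : w ∈ f) : ep e ≠ bp w f := by
  intro h
  exact Finset.disjoint_left.mp (R.disj_e_b e he w f hf hwf) (R.ep_mem e he)
    (h ▸ R.bp_mem w f hf hwf)

lemma Rvp_not_Ae {v : V} {e : Sym2 V} (he : e ∈ H.edgeSet) : vp v ∉ Ae e :=
  fun h => Finset.disjoint_left.mp (R.disj_v_a v e he) (R.vp_mem v) h

lemma Rep_not_Ae {e f : Sym2 V} (he : e ∈ H.edgeSet) (hf : f ∈ H.edgeSet) :
    ep e ∉ Ae f :=
  fun h => Finset.disjoint_left.mp (R.disj_e_a e he f hf) (R.ep_mem e he) h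

lemma Rbp_not_Ae {v : V} {e f : Sym2 V} (he : e ∈ H.edgeSet) (hve : v ∈ e)
    (hf : f ∈ H.edgeSet) : bp v e ∉ Ae f :=
  fun h => Finset.disjoint_left.mp (R.disj_b_a v e he hve f hf)
    (R.bp_mem v e he hve) h

lemma adj_Pv_plain {x y : N} {v : V} (hx : x ∈ Pv v) (hne : x ≠ vp v)
    (hxy : G.Adj x y) : y ∈ Pv v := by
  rcases R.adj_cases x y hxy with
    ⟨w, hx1, hy1⟩ |
    ⟨f, hf, hx1, hy1⟩ |
    ⟨w, f, hf, hwf, hx1, hy1⟩ |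
    ⟨f, hf, hx1, hy1⟩ |
    ⟨w, f, hf, hwf, (⟨hx1, hy1⟩ | ⟨hy1, hx1⟩)⟩ |
    ⟨w, f, hf, hwf, (⟨hx1, hy1⟩ | ⟨hy1, hx1⟩)⟩ |
    ⟨f, hf, (⟨hx1, hy1⟩ | ⟨hy1, hx1⟩)⟩ |
    ⟨w, f, hf, hwf, (⟨hx1, hy1⟩ | ⟨hy1, hx1⟩)⟩
  · rwa [RPv_eq R hx hx1]
  · exact absurd hx1 (fun h => Finset.disjoint_left.mp (R.disj_v_e v f hf) hx h)
  · exact absurd hx1 (fun h => Finset.disjoint_left.mp (R.disj_v_b v w f hf hwf) hx h)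
  · exact absurd hx1 (fun h => Finset.disjoint_left.mp (R.disj_v_a v f hf) hx h)
  · exact absurd (hx1 ▸ R.bp_mem w f hf hwf)
      (fun h => Finset.disjoint_left.mp (R.disj_v_b v w f hf hwf) hx h)
  · have hw : v = w := RPv_eq R hx (hx1 ▸ R.vp_mem w)
    exact absurd (hw ▸ hx1) hne
  · exact absurd (hx1 ▸ R.bp_mem w f hf hwf)
      (fun h => Finset.disjoint_left.mp (R.disj_v_b v w f hf hwf) hx h)
  · exact absurd (hx1 ▸ R.ep_mem f hf)
      (fun h => Finset.disjoint_left.mp (R.disj_v_e v f hf) hx h)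
  · exact absurd hx1 (fun h => Finset.disjoint_left.mp (R.disj_v_a v f hf) hx h)
  · exact absurd (hx1 ▸ R.ep_mem f hf)
      (fun h => Finset.disjoint_left.mp (R.disj_v_e v f hf) hx h)
  · exact absurd hx1 (fun h => Finset.disjoint_left.mp (R.disj_v_a v f hf) hx h)
  · exact absurd (hx1 ▸ R.bp_mem w f hf hwf)
      (fun h => Finset.disjoint_left.mp (R.disj_v_b v w f hf hwf) hx h)

lemma adj_Pe_plain {x y : N} {e : Sym2 V} (he : e ∈ H.edgeSet) (hx : x ∈ Pe e)
    (hne : x ≠ ep e) (hxy : G.Adj x y) : y ∈ Pe e := by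
  rcases R.adj_cases x y hxy with
    ⟨w, hx1, hy1⟩ |
    ⟨f, hf, hx1, hy1⟩ |
    ⟨w, f, hf, hwf, hx1, hy1⟩ |
    ⟨f, hf, hx1, hy1⟩ |
    ⟨w, f, hf, hwf, (⟨hx1, hy1⟩ | ⟨hy1, hx1⟩)⟩ |
    ⟨w, f, hf, hwf, (⟨hx1, hy1⟩ | ⟨hy1, hx1⟩)⟩ |
    ⟨f, hf, (⟨hx1, hy1⟩ | ⟨hy1, hx1⟩)⟩ |
    ⟨w, f, hf, hwf, (⟨hx1, hy1⟩ | ⟨hy1, hx1⟩)⟩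
  · exact absurd hx (fun h => Finset.disjoint_left.mp (R.disj_v_e w e he) hx1 h)
  · rwa [RPe_eq R he hf hx hx1]
  · exact absurd hx1 (fun h => Finset.disjoint_left.mp (R.disj_e_b e he w f hf hwf) hx h)
  · exact absurd hx1 (fun h => Finset.disjoint_left.mp (R.disj_e_a e he f hf) hx h)
  · exact absurd (hx1 ▸ R.bp_mem w f hf hwf)
      (fun h => Finset.disjoint_left.mp (R.disj_e_b e he w f hf hwf) hx h)
  · exact absurd hx (fun h => Finset.disjoint_left.mp (R.disj_v_e w e he)
      (hx1 ▸ R.vp_mem w) h)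
  · exact absurd (hx1 ▸ R.bp_mem w f hf hwf)
      (fun h => Finset.disjoint_left.mp (R.disj_e_b e he w f hf hwf) hx h)
  · exact absurd (RPe_eq R hf he (hx1 ▸ R.ep_mem f hf) hx ▸ hx1) hne
  · exact absurd hx1 (fun h => Finset.disjoint_left.mp (R.disj_e_a e he f hf) hx h)
  · exact absurd (RPe_eq R hf he (hx1 ▸ R.ep_mem f hf) hx ▸ hx1) hne
  · exact absurd hx1 (fun h => Finset.disjoint_left.mp (R.disj_e_a e he f hf) hx h)
  · exact absurd (hx1 ▸ R.bp_mem w f hf hwf)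
      (fun h => Finset.disjoint_left.mp (R.disj_e_b e he w f hf hwf) hx h)

lemma adj_Pve_plain {x y : N} {v : V} {e : Sym2 V} (he : e ∈ H.edgeSet) (hve : v ∈ e)
    (hx : x ∈ Pve v e) (hne : x ≠ bp v e) (hxy : G.Adj x y) : y ∈ Pve v e := by
  rcases R.adj_cases x y hxy with
    ⟨w, hx1, hy1⟩ |
    ⟨f, hf, hx1, hy1⟩ |
    ⟨w, f, hf, hwf, hx1, hy1⟩ |
    ⟨f, hf, hx1, hy1⟩ |
    ⟨w, f, hf, hwf, (⟨hx1, hy1⟩ | ⟨hy1, hx1⟩)⟩ |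
    ⟨w, f, hf, hwf, (⟨hx1, hy1⟩ | ⟨hy1, hx1⟩)⟩ |
    ⟨f, hf, (⟨hx1, hy1⟩ | ⟨hy1, hx1⟩)⟩ |
    ⟨w, f, hf, hwf, (⟨hx1, hy1⟩ | ⟨hy1, hx1⟩)⟩
  · exact absurd hx (fun h => Finset.disjoint_left.mp (R.disj_v_b w v e he hve) hx1 h)
  · exact absurd hx (fun h => Finset.disjoint_left.mp (R.disj_e_b f hf v e he hve) hx1 h)
  · obtain ⟨h1, h2⟩ := RPve_eq R hf hwf he hve hx1 hx
    rwa [← h1, ← h2]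
  · exact absurd hx1 (fun h => Finset.disjoint_left.mp (R.disj_b_a v e he hve f hf) hx h)
  · obtain ⟨h1, h2⟩ := RPve_eq R hf hwf he hve (hx1 ▸ R.bp_mem w f hf hwf) hx
    exact absurd (h1 ▸ h2 ▸ hx1) hne
  · exact absurd hx (fun h => Finset.disjoint_left.mp (R.disj_v_b w v e he hve)
      (hx1 ▸ R.vp_mem w) h)
  · obtain ⟨h1, h2⟩ := RPve_eq R hf hwf he hve (hx1 ▸ R.bp_mem w f hf hwf) hx
    exact absurd (h1 ▸ h2 ▸ hx1) hne
  · exact absurd hx (fun h => Finset.disjoint_left.mp (R.disj_e_b f hf v e he hve)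
      (hx1 ▸ R.ep_mem f hf) h)
  · exact absurd hx1 (fun h => Finset.disjoint_left.mp (R.disj_b_a v e he hve f hf) hx h)
  · exact absurd hx (fun h => Finset.disjoint_left.mp (R.disj_e_b f hf v e he hve)
      (hx1 ▸ R.ep_mem f hf) h)
  · exact absurd hx1 (fun h => Finset.disjoint_left.mp (R.disj_b_a v e he hve f hf) hx h)
  · obtain ⟨h1, h2⟩ := RPve_eq R hf hwf he hve (hx1 ▸ R.bp_mem w f hf hwf) hx
    exact absurd (h1 ▸ h2 ▸ hx1) hne

lemma adj_vp_mem {y : N} {v : V} (hxy : G.Adj (vp v) y) :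
    y ∈ Pv v ∨ ∃ e ∈ H.edgeSet, v ∈ e ∧ y = bp v e := by
  have hx : vp v ∈ Pv v := R.vp_mem v
  rcases R.adj_cases (vp v) y hxy with
    ⟨w, hx1, hy1⟩ |
    ⟨f, hf, hx1, hy1⟩ |
    ⟨w, f, hf, hwf, hx1, hy1⟩ |
    ⟨f, hf, hx1, hy1⟩ |
    ⟨w, f, hf, hwf, (⟨hx1, hy1⟩ | ⟨hy1, hx1⟩)⟩ |
    ⟨w, f, hf, hwf, (⟨hx1, hy1⟩ | ⟨hy1, hx1⟩)⟩ |
    ⟨f, hf, (⟨hx1, hy1⟩ | ⟨hy1, hx1⟩)⟩ |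
    ⟨w, f, hf, hwf, (⟨hx1, hy1⟩ | ⟨hy1, hx1⟩)⟩
  · exact Or.inl (RPv_eq R hx hx1 ▸ hy1)
  · exact absurd hx1 (fun h => Finset.disjoint_left.mp (R.disj_v_e v f hf) hx h)
  · exact absurd hx1 (fun h => Finset.disjoint_left.mp (R.disj_v_b v w f hf hwf) hx h)
  · exact absurd hx1 (fun h => Finset.disjoint_left.mp (R.disj_v_a v f hf) hx h)
  · exact absurd (hx1 ▸ R.bp_mem w f hf hwf)
      (fun h => Finset.disjoint_left.mp (R.disj_v_b v w f hf hwf) hx h)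
  · have hw : v = w := Rvp_inj R hx1
    exact Or.inr ⟨f, hf, hw ▸ hwf, hw ▸ hy1⟩
  · exact absurd (hx1 ▸ R.bp_mem w f hf hwf)
      (fun h => Finset.disjoint_left.mp (R.disj_v_b v w f hf hwf) hx h)
  · exact absurd hx1 (Rvp_ne_ep R hf)
  · exact absurd hx1 (fun h => Finset.disjoint_left.mp (R.disj_v_a v f hf) hx h)
  · exact absurd hx1 (Rvp_ne_ep R hf)
  · exact absurd hx1 (fun h => Finset.disjoint_left.mp (R.disj_v_a v f hf) hx h)
  · exact absurd hx1 (Rvp_ne_bp R hf hwf)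

lemma adj_ep_mem {y : N} {e : Sym2 V} (he : e ∈ H.edgeSet) (hxy : G.Adj (ep e) y) :
    y ∈ Pe e ∨ (∃ w, w ∈ e ∧ y = bp w e) ∨ y ∈ Ae e := by
  have hx : ep e ∈ Pe e := R.ep_mem e he
  rcases R.adj_cases (ep e) y hxy with
    ⟨w, hx1, hy1⟩ |
    ⟨f, hf, hx1, hy1⟩ |
    ⟨w, f, hf, hwf, hx1, hy1⟩ |
    ⟨f, hf, hx1, hy1⟩ |
    ⟨w, f, hf, hwf, (⟨hx1, hy1⟩ | ⟨hy1, hx1⟩)⟩ |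
    ⟨w, f, hf, hwf, (⟨hx1, hy1⟩ | ⟨hy1, hx1⟩)⟩ |
    ⟨f, hf, (⟨hx1, hy1⟩ | ⟨hy1, hx1⟩)⟩ |
    ⟨w, f, hf, hwf, (⟨hx1, hy1⟩ | ⟨hy1, hx1⟩)⟩
  · exact absurd hx (fun h => Finset.disjoint_left.mp (R.disj_v_e w e he) hx1 h)
  · exact Or.inl (RPe_eq R he hf hx hx1 ▸ hy1)
  · exact absurd hx1 (fun h => Finset.disjoint_left.mp (R.disj_e_b e he w f hf hwf) hx h)
  · exact absurd hx1 (fun h => Finset.disjoint_left.mp (R.disj_e_a e he f hf) hx h)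
  · exact absurd (hx1 ▸ R.bp_mem w f hf hwf)
      (fun h => Finset.disjoint_left.mp (R.disj_e_b e he w f hf hwf) hx h)
  · exact absurd hx (fun h => Finset.disjoint_left.mp (R.disj_v_e w e he)
      (hx1 ▸ R.vp_mem w) h)
  · exact absurd (hx1 ▸ R.bp_mem w f hf hwf)
      (fun h => Finset.disjoint_left.mp (R.disj_e_b e he w f hf hwf) hx h)
  · have hfe : f = e := Rep_inj R hf he hx1.symm
    subst hfe
    exact Or.inr (Or.inl ⟨w, hwf, hy1⟩)
  · exact absurd hx1 (fun h => Finset.disjoint_left.mp (R.disj_e_a e he f hf) hx h)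
  · have hfe : f = e := Rep_inj R hf he hx1.symm
    subst hfe
    exact Or.inr (Or.inr hy1)
  · exact absurd hx1 (fun h => Finset.disjoint_left.mp (R.disj_e_a e he f hf) hx h)
  · exact absurd (hx1 ▸ R.bp_mem w f hf hwf)
      (fun h => Finset.disjoint_left.mp (R.disj_e_b e he w f hf hwf) hx h)

lemma adj_bp_mem {y : N} {v : V} {e : Sym2 V} (he : e ∈ H.edgeSet) (hve : v ∈ e)
    (hxy : G.Adj (bp v e) y) : y ∈ Pve v e ∨ y = vp v ∨ y = ep e ∨ y ∈ Ae e := by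
  have hx : bp v e ∈ Pve v e := R.bp_mem v e he hve
  rcases R.adj_cases (bp v e) y hxy with
    ⟨w, hx1, hy1⟩ |
    ⟨f, hf, hx1, hy1⟩ |
    ⟨w, f, hf, hwf, hx1, hy1⟩ |
    ⟨f, hf, hx1, hy1⟩ |
    ⟨w, f, hf, hwf, (⟨hx1, hy1⟩ | ⟨hy1, hx1⟩)⟩ |
    ⟨w, f, hf, hwf, (⟨hx1, hy1⟩ | ⟨hy1, hx1⟩)⟩ |
    ⟨f, hf, (⟨hx1, hy1⟩ | ⟨hy1, hx1⟩)⟩ |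
    ⟨w, f, hf, hwf, (⟨hx1, hy1⟩ | ⟨hy1, hx1⟩)⟩
  · exact absurd hx (fun h => Finset.disjoint_left.mp (R.disj_v_b w v e he hve) hx1 h)
  · exact absurd hx (fun h => Finset.disjoint_left.mp (R.disj_e_b f hf v e he hve) hx1 h)
  · obtain ⟨h1, h2⟩ := RPve_eq R hf hwf he hve hx1 hx
    exact Or.inl (h1 ▸ h2 ▸ hy1)
  · exact absurd hx1 (fun h => Finset.disjoint_left.mp (R.disj_b_a v e he hve f hf) hx h)
  · obtain ⟨h1, h2⟩ := Rbp_inj R hf hwf he hve hx1.symm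
    exact Or.inr (Or.inl (h1 ▸ hy1))
  · exact absurd hx1.symm (Rvp_ne_bp R he hve)
  · obtain ⟨h1, h2⟩ := Rbp_inj R hf hwf he hve hx1.symm
    exact Or.inr (Or.inr (Or.inl (h2 ▸ hy1)))
  · exact absurd hx1.symm (Rep_ne_bp R hf he hve)
  · exact absurd hx1 (fun h => Finset.disjoint_left.mp (R.disj_b_a v e he hve f hf) hx h)
  · exact absurd hx1.symm (Rep_ne_bp R hf he hve)
  · exact absurd hx1 (fun h => Finset.disjoint_left.mp (R.disj_b_a v e he hve f hf) hx h)
  · obtain ⟨h1, h2⟩ := Rbp_inj R hf hwf he hve hx1.symm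
    exact Or.inr (Or.inr (Or.inr (h2 ▸ hy1)))

lemma adj_Ae_mem {a y : N} {e : Sym2 V} (he : e ∈ H.edgeSet) (ha : a ∈ Ae e)
    (hxy : G.Adj a y) : y ∈ Ae e ∨ y = ep e ∨ ∃ w, w ∈ e ∧ y = bp w e := by
  rcases R.adj_cases a y hxy with
    ⟨w, hx1, hy1⟩ |
    ⟨f, hf, hx1, hy1⟩ |
    ⟨w, f, hf, hwf, hx1, hy1⟩ |
    ⟨f, hf, hx1, hy1⟩ |
    ⟨w, f, hf, hwf, (⟨hx1, hy1⟩ | ⟨hy1, hx1⟩)⟩ |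
    ⟨w, f, hf, hwf, (⟨hx1, hy1⟩ | ⟨hy1, hx1⟩)⟩ |
    ⟨f, hf, (⟨hx1, hy1⟩ | ⟨hy1, hx1⟩)⟩ |
    ⟨w, f, hf, hwf, (⟨hx1, hy1⟩ | ⟨hy1, hx1⟩)⟩
  · exact absurd ha (fun h => Finset.disjoint_left.mp (R.disj_v_a w e he) hx1 h)
  · exact absurd ha (fun h => Finset.disjoint_left.mp (R.disj_e_a f hf e he) hx1 h)
  · exact absurd ha (fun h => Finset.disjoint_left.mp (R.disj_b_a w f hf hwf e he) hx1 h)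
  · exact Or.inl (RAe_eq R hf he hx1 ha ▸ hy1)
  · exact absurd ha (fun h => Finset.disjoint_left.mp (R.disj_b_a w f hf hwf e he)
      (hx1 ▸ R.bp_mem w f hf hwf) h)
  · exact absurd ha (fun h => Finset.disjoint_left.mp (R.disj_v_a w e he)
      (hx1 ▸ R.vp_mem w) h)
  · exact absurd ha (fun h => Finset.disjoint_left.mp (R.disj_b_a w f hf hwf e he)
      (hx1 ▸ R.bp_mem w f hf hwf) h)
  · exact absurd ha (fun h => Finset.disjoint_left.mp (R.disj_e_a f hf e he)
      (hx1 ▸ R.ep_mem f hf) h)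
  · have hfe : f = e := RAe_eq R hf he hx1 ha
    subst hfe
    exact Or.inr (Or.inl hy1)
  · exact absurd ha (fun h => Finset.disjoint_left.mp (R.disj_e_a f hf e he)
      (hx1 ▸ R.ep_mem f hf) h)
  · have hfe : f = e := RAe_eq R hf he hx1 ha
    subst hfe
    exact Or.inr (Or.inr ⟨w, hwf, hy1⟩)
  · exact absurd ha (fun h => Finset.disjoint_left.mp (R.disj_b_a w f hf hwf e he)
      (hx1 ▸ R.bp_mem w f hf hwf) h)

end Structure

section NoPlain
variable {N : Type*} [Fintype N] [DecidableEq N]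

open Fin.NatCast in
lemma AHG_no_plain {G : SimpleGraph N} {k : ℕ} (hk : 3 ≤ k) (hodd : Odd k)
    {P : Finset N} (hP : IsCirculantGadget G (k - 1) (minK' k) P)
    {Γ : CoalitionStructure N} {C : Finset N}
    (hpart : ∀ i ∈ P, Γ.part i = P)
    {D : N} (hD : D ∈ P)
    (hloc : ∀ x ∈ P, x ≠ D → ∀ y, G.Adj x y → y ∈ P)
    (hB : Blocks (utilMinEQ G) Γ C) :
    ∀ x ∈ P, x ≠ D → x ∉ C := by
  intro x hxP hxD hxC
  set k' := minK' k with hk'def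
  have hk' : k + 1 ≤ k' := by rw [hk'def]; unfold minK'; omega
  obtain ⟨d, hd⟩ : ∃ d, k = 2 * d + 1 := by obtain ⟨m, hm⟩ := hodd; exact ⟨m, by omega⟩
  have hn : k' ≤ Fintype.card N := AHG_gadget_card_le hP
  have hgu : ∀ z ∈ P, utilMinEQ G (Γ.part z) z
      = ((Fintype.card N : ℤ) + 1) * ((k : ℤ) - 1) - ((k' : ℤ) - 1) := by
    intro z hz
    rw [hpart z hz]
    exact AHG_gadget_util hk hodd hk' hP hz
  have key : ∀ z ∈ P, z ≠ D → z ∈ C → ∀ y, G.Adj z y → y ∈ C := by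
    intro z hz hzD hzC y hy
    have hth := AHG_block_core hB hzC (hgu z hz)
    have hge : k - 1 ≤ (friendsIn G C z).card :=
      AHG_fge hzC hk hn (hth z (Finset.mem_insert_self _ _))
    have hsub : friendsIn G C z ⊆ friendsIn G P z := by
      intro w hw
      unfold friendsIn at hw ⊢
      rw [Finset.mem_filter] at hw ⊢
      exact ⟨hloc z hz hzD w hw.2, hw.2⟩
    have hcards : (friendsIn G P z).card = k - 1 := AHG_gadget_friends hk hodd hk' hP hz
    have heq : friendsIn G C z = friendsIn G P z :=
      Finset.eq_of_subset_of_card_le hsub (by omega)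
    have hyP : y ∈ friendsIn G P z := by
      unfold friendsIn; rw [Finset.mem_filter]; exact ⟨hloc z hz hzD y hy, hy⟩
    exact AHG_friendsIn_subset G C z (heq ▸ hyP)
  obtain ⟨f, hinj, himg, hadj⟩ := id hP
  haveI : NeZero k' := ⟨by omega⟩
  have hPmem : ∀ b : Fin k', f b ∈ P := fun b => by
    rw [← himg]; exact Finset.mem_image.mpr ⟨b, Finset.mem_univ _, rfl⟩
  have hd2 : (k - 1) / 2 = d := by omega
  have hv1 : (1 : Fin k').val = 1 := by
    rw [Fin.val_one']; exact Nat.mod_eq_of_lt (by omega)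
  have hone : ∀ b : Fin k', G.Adj (f b) (f (b + 1)) := by
    intro b
    rw [hadj]
    constructor
    · intro h
      have h2 : (0 : Fin k') = 1 := add_left_cancel (a := b) (by rw [add_zero]; exact h)
      have h3 := congrArg Fin.val h2
      rw [hv1] at h3
      simp at h3
    · rw [AHG_cycDist_add_ne b (by rw [hv1]), hv1, hd2]
      omega
  have hstep : ∀ b : Fin k', f b ≠ D → f b ∈ C → f (b + 1) ∈ C ∧ f (b - 1) ∈ C := by
    intro b hbD hbC
    refine ⟨key (f b) (hPmem b) hbD hbC _ (hone b), ?_⟩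
    have h2 : G.Adj (f (b - 1)) (f b) := by
      have h3 := hone (b - 1)
      rwa [sub_add_cancel] at h3
    exact key (f b) (hPmem b) hbD hbC _ h2.symm
  obtain ⟨a0, ha0⟩ : ∃ a0, f a0 = x := by
    rw [← himg] at hxP; obtain ⟨a0, -, h⟩ := Finset.mem_image.mp hxP; exact ⟨a0, h⟩
  obtain ⟨aD, haD⟩ : ∃ aD, f aD = D := by
    rw [← himg] at hD; obtain ⟨aD, -, h⟩ := Finset.mem_image.mp hD; exact ⟨aD, h⟩
  set u : Fin k' := aD - a0 with hu
  have hane : a0 ≠ aD := fun h => hxD (by rw [← ha0, h, haD])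
  have hu0 : u ≠ 0 := by rw [hu]; exact sub_ne_zero.mpr (Ne.symm hane)
  set t0 := u.val with ht0
  have ht01 : 1 ≤ t0 := by
    rcases Nat.eq_zero_or_pos t0 with h | h
    · exact absurd (Fin.ext h : u = 0) hu0
    · exact h
  have ht0k : t0 < k' := u.isLt
  have haDu : aD = a0 + u := by rw [hu, add_comm, sub_add_cancel]
  have hfne : ∀ b : Fin k', b ≠ aD → f b ≠ D := by
    intro b hb h
    exact hb (hinj (h.trans haD.symm))
  have fwd : ∀ t : ℕ, t < t0 → f (a0 + (t : Fin k')) ∈ C := by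
    intro t
    induction t with
    | zero => intro _; rw [Nat.cast_zero, add_zero, ha0]; exact hxC
    | succ t ih =>
      intro hlt
      have hmem := ih (by omega)
      have hval : ((t : Fin k')).val = t := by
        rw [Fin.val_natCast]; exact Nat.mod_eq_of_lt (by omega)
      have hpne : a0 + (t : Fin k') ≠ aD := by
        rw [haDu]
        intro h
        have h2 : (t : Fin k') = u := add_left_cancel h
        have h3 := congrArg Fin.val h2
        rw [hval] at h3
        omega
      have hstep' := (hstep _ (hfne _ hpne) hmem).1
      have hcast : ((t + 1 : ℕ) : Fin k') = (t : Fin k') + 1 := by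
        rw [Nat.cast_succ]
      rw [hcast, ← add_assoc]
      exact hstep'
  have bwd : ∀ t : ℕ, t < k' - t0 → f (a0 - (t : Fin k')) ∈ C := by
    intro t
    induction t with
    | zero => intro _; rw [Nat.cast_zero, sub_zero, ha0]; exact hxC
    | succ t ih =>
      intro hlt
      have hmem := ih (by omega)
      have hval : ((t : Fin k')).val = t := by
        rw [Fin.val_natCast]; exact Nat.mod_eq_of_lt (by omega)
      have hpne : a0 - (t : Fin k') ≠ aD := by
        rw [haDu]
        intro h
        rw [sub_eq_add_neg] at h
        have h2 : -(t : Fin k') = u := add_left_cancel h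
        rcases Nat.eq_zero_or_pos t with h4 | h4
        · subst h4
          rw [Nat.cast_zero, neg_zero] at h2
          exact hu0 h2.symm
        · have h5 : (-(t : Fin k')).val = k' - t := by
            rw [AHG_val_neg _ (by rw [hval]; omega), hval]
          have h6 := congrArg Fin.val h2
          rw [h5] at h6
          omega
      have hstep' := (hstep _ (hfne _ hpne) hmem).2
      have hcast : ((t + 1 : ℕ) : Fin k') = (t : Fin k') + 1 := by
        rw [Nat.cast_succ]
      rw [hcast, ← sub_sub]
      exact hstep'
  have hallne : ∀ b : Fin k', b ≠ aD → f b ∈ C := by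
    intro b hb
    set j : Fin k' := b - a0 with hj
    have hbj : b = a0 + j := by rw [hj, add_comm, sub_add_cancel]
    have hjne : j ≠ u := by
      intro h
      exact hb (by rw [hbj, h, ← haDu])
    rcases Nat.lt_or_ge j.val t0 with hlt | hge
    · have h2 := fwd j.val hlt
      rwa [Fin.cast_val_eq_self, ← hbj] at h2
    · have hgt : t0 < j.val := by
        rcases Nat.eq_or_lt_of_le hge with h | h
        · exact absurd (Fin.ext h.symm : j = u) hjne
        · exact h
      have hjk : j.val < k' := j.isLt
      have hb2 := bwd (k' - j.val) (by omega)
      have hval : (((k' - j.val : ℕ) : Fin k')).val = k' - j.val := by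
        rw [Fin.val_natCast]; exact Nat.mod_eq_of_lt (by omega)
      have hneg : -(((k' - j.val : ℕ) : Fin k')) = j := by
        apply Fin.ext
        rw [AHG_val_neg _ (by rw [hval]; omega), hval]
        omega
      rw [sub_eq_add_neg, hneg, ← hbj] at hb2
      exact hb2
  have hallC : ∀ b : Fin k', f b ∈ C := by
    intro b
    by_cases hb : b = aD
    · have hq : aD - 1 ≠ aD := by
        intro h
        have h2 : (1 : Fin k') = 0 := sub_eq_self.mp h
        have h3 := congrArg Fin.val h2
        rw [hv1] at h3
        simp at h3
      have h3 := (hstep (aD - 1) (hfne _ hq) (hallne _ hq)).1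
      rw [sub_add_cancel] at h3
      rw [hb]
      exact h3
    · exact hallne b hb
  have hPC : P ⊆ C := by
    intro c hc
    rw [← himg] at hc
    obtain ⟨b, -, rfl⟩ := Finset.mem_image.mp hc
    exact hallC b
  have hcard : k' ≤ C.card := by
    rw [← AHG_gadget_card hP]
    exact Finset.card_le_card hPC
  have hth := AHG_block_core hB hxC (hgu x hxP)
  have hsub : friendsIn G C x ⊆ friendsIn G P x := by
    intro w hw
    unfold friendsIn at hw ⊢
    rw [Finset.mem_filter] at hw ⊢
    exact ⟨hloc x hxP hxD w hw.2, hw.2⟩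
  have hF : (friendsIn G C x).card ≤ k - 1 := by
    have h2 := Finset.card_le_card hsub
    rw [AHG_gadget_friends hk hodd hk' hP hxP] at h2
    exact h2
  have hcle := AHG_cle hxC hk (by omega) hF (hth x (Finset.mem_insert_self _ _))
  omega

end NoPlain

lemma AHG_minK'_ge {k : ℕ} : k + 1 ≤ minK' k := by unfold minK'; omega

lemma AHG_minK'_pos {k : ℕ} : 1 ≤ minK' k := by unfold minK'; omega

lemma AHG_endpts_card {V : Type*} [Fintype V] [DecidableEq V] {e : Sym2 V}
    (hd : ¬ e.IsDiag) : ((univ : Finset V).filter (· ∈ e)).card = 2 := by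
  induction e using Sym2.ind with
  | _ x y =>
    have hxy : x ≠ y := by
      intro h; exact hd (by rw [h]; exact Sym2.mk_isDiag_iff.mpr rfl)
    have hset : ((univ : Finset V).filter (· ∈ s(x, y))) = {x, y} := by
      ext w
      simp [Sym2.mem_iff]
    rw [hset, Finset.card_insert_of_notMem (by simpa using hxy), Finset.card_singleton]

section HardDir
variable {V N : Type*} [Fintype V] [DecidableEq V] [Fintype N] [DecidableEq N]
variable {H : SimpleGraph V} {k : ℕ} {G : SimpleGraph N}
variable {Pv : V → Finset N} {Pe : Sym2 V → Finset N} {Pve : V → Sym2 V → Finset N}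
variable {Ae : Sym2 V → Finset N} {vp : V → N} {ep : Sym2 V → N} {bp : V → Sym2 V → N}
variable {Γ : CoalitionStructure N} {C : Finset N}
variable (R : MinReduction H k G Pv Pe Pve Ae vp ep bp)
variable (hk : 3 ≤ k) (hodd : Odd k) (hΓ : IsMinGamma H Pv Pe Pve Ae Γ)
variable (hB : Blocks (utilMinEQ G) Γ C)
include R hk hodd hΓ hB

lemma HnoPlain_v : ∀ (v : V), ∀ x ∈ Pv v, x ≠ vp v → x ∉ C :=
  fun v => AHG_no_plain hk hodd (R.circ_v v) (hΓ.1 v) (R.vp_mem v)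
    (fun x hx hne y hy => adj_Pv_plain R hx hne hy) hB

lemma HnoPlain_e : ∀ e ∈ H.edgeSet, ∀ x ∈ Pe e, x ≠ ep e → x ∉ C :=
  fun e he => AHG_no_plain hk hodd (R.circ_e e he) (hΓ.2.1 e he) (R.ep_mem e he)
    (fun x hx hne y hy => adj_Pe_plain R he hx hne hy) hB

lemma HnoPlain_ve : ∀ (v : V), ∀ e ∈ H.edgeSet, v ∈ e →
    ∀ x ∈ Pve v e, x ≠ bp v e → x ∉ C :=
  fun v e he hve => AHG_no_plain hk hodd (R.circ_ve v e he hve) (hΓ.2.2.1 v e he hve)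
    (R.bp_mem v e he hve) (fun x hx hne y hy => adj_Pve_plain R he hve hx hne hy) hB

lemma Hutil_vp (v : V) : utilMinEQ G (Γ.part (vp v)) (vp v)
    = ((Fintype.card N : ℤ) + 1) * ((k : ℤ) - 1) - ((minK' k : ℤ) - 1) := by
  rw [hΓ.1 v _ (R.vp_mem v)]
  exact AHG_gadget_util hk hodd AHG_minK'_ge (R.circ_v v) (R.vp_mem v)

lemma Hutil_ep {e : Sym2 V} (he : e ∈ H.edgeSet) : utilMinEQ G (Γ.part (ep e)) (ep e)
    = ((Fintype.card N : ℤ) + 1) * ((k : ℤ) - 1) - ((minK' k : ℤ) - 1) := by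
  rw [hΓ.2.1 e he _ (R.ep_mem e he)]
  exact AHG_gadget_util hk hodd AHG_minK'_ge (R.circ_e e he) (R.ep_mem e he)

lemma Hutil_bp {v : V} {e : Sym2 V} (he : e ∈ H.edgeSet) (hve : v ∈ e) :
    utilMinEQ G (Γ.part (bp v e)) (bp v e)
    = ((Fintype.card N : ℤ) + 1) * ((k : ℤ) - 1) - ((minK' k : ℤ) - 1) := by
  rw [hΓ.2.2.1 v e he hve _ (R.bp_mem v e he hve)]
  exact AHG_gadget_util hk hodd AHG_minK'_ge (R.circ_ve v e he hve) (R.bp_mem v e he hve)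

lemma Hn_ge : minK' k ≤ Fintype.card N := by
  obtain ⟨x, hx⟩ := hB.1
  rcases R.cover x with ⟨v, hxv⟩ | ⟨e, he, hxe⟩ | ⟨v, e, he, hve, hxe⟩ | ⟨e, he, hxe⟩
  · exact AHG_gadget_card_le (R.circ_v v)
  · exact AHG_gadget_card_le (R.circ_e e he)
  · exact AHG_gadget_card_le (R.circ_ve v e he hve)
  · exact AHG_gadget_card_le (R.circ_e e he)

lemma Hbp_C {v : V} {e : Sym2 V} (he : e ∈ H.edgeSet) (hve : v ∈ e)
    (hbC : bp v e ∈ C) :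
    vp v ∈ C ∧ ep e ∈ C ∧ (∀ a ∈ Ae e, a ∈ C) ∧ C.card ≤ minK' k - 1 := by
  have hn := Hn_ge R hk hodd hΓ hB
  have hth := AHG_block_core hB hbC (Hutil_bp R hk hodd hΓ hB he hve)
  set S := insert (vp v) (insert (ep e) (Ae e)) with hS
  have hsub : friendsIn G C (bp v e) ⊆ S := by
    intro y hy
    rw [friendsIn, Finset.mem_filter] at hy
    obtain ⟨hyC, hadj⟩ := hy
    rcases adj_bp_mem R he hve hadj with hP | rfl | rfl | hA
    · exact absurd hyC (HnoPlain_ve R hk hodd hΓ hB v e he hve y hP hadj.ne')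
    · exact Finset.mem_insert_self _ _
    · exact Finset.mem_insert_of_mem (Finset.mem_insert_self _ _)
    · exact Finset.mem_insert_of_mem (Finset.mem_insert_of_mem hA)
  have hScard : S.card = k - 1 := by
    rw [hS, Finset.card_insert_of_notMem, Finset.card_insert_of_notMem
      (Rep_not_Ae R he he), R.Ae_card e he]
    · omega
    · intro hmem
      rcases Finset.mem_insert.mp hmem with h | h
      · exact Rvp_ne_ep R he h
      · exact Rvp_not_Ae R he h
  have hge := AHG_fge hbC hk hn (hth _ (Finset.mem_insert_self _ _))
  have heq : friendsIn G C (bp v e) = S :=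
    Finset.eq_of_subset_of_card_le hsub (by omega)
  have hCmem : ∀ z ∈ S, z ∈ C := by
    intro z hz
    exact AHG_friendsIn_subset G C (bp v e) (heq ▸ hz)
  refine ⟨hCmem _ (Finset.mem_insert_self _ _),
    hCmem _ (Finset.mem_insert_of_mem (Finset.mem_insert_self _ _)),
    fun a ha => hCmem _ (Finset.mem_insert_of_mem (Finset.mem_insert_of_mem ha)), ?_⟩
  exact AHG_cle hbC hk AHG_minK'_pos (by rw [heq, hScard])
    (hth _ (Finset.mem_insert_self _ _))

lemma Hep_C {e : Sym2 V} (he : e ∈ H.edgeSet) (hepC : ep e ∈ C) :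
    ∀ w ∈ e, bp w e ∈ C := by
  intro w hwe
  have hn := Hn_ge R hk hodd hΓ hB
  have hnd : ¬ e.IsDiag := H.not_isDiag_of_mem_edgeSet he
  set o := Sym2.Mem.other' hwe with ho
  have hspec : s(w, o) = e := Sym2.other_spec' hwe
  have hone : o ≠ w := by rw [ho, ← Sym2.other_eq_other']; exact Sym2.other_ne hnd hwe
  have hoe : o ∈ e := hspec ▸ Sym2.mem_mk_right w o
  have hth := AHG_block_core hB hepC (Hutil_ep R hk hodd hΓ hB he)
  set S := insert (bp w e) (insert (bp o e) (Ae e)) with hS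
  have hsub : friendsIn G C (ep e) ⊆ S := by
    intro y hy
    rw [friendsIn, Finset.mem_filter] at hy
    obtain ⟨hyC, hadj⟩ := hy
    rcases adj_ep_mem R he hadj with hP | ⟨w', hw'e, rfl⟩ | hA
    · exact absurd hyC (HnoPlain_e R hk hodd hΓ hB e he y hP hadj.ne')
    · have : w' = w ∨ w' = o := by
        rw [← hspec] at hw'e; exact Sym2.mem_iff.mp hw'e
      rcases this with rfl | rfl
      · exact Finset.mem_insert_self _ _
      · exact Finset.mem_insert_of_mem (Finset.mem_insert_self _ _)
    · exact Finset.mem_insert_of_mem (Finset.mem_insert_of_mem hA)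
  have hScard : S.card = k - 1 := by
    rw [hS, Finset.card_insert_of_notMem, Finset.card_insert_of_notMem
      (Rbp_not_Ae R he hoe he), R.Ae_card e he]
    · omega
    · intro hmem
      rcases Finset.mem_insert.mp hmem with h | h
      · exact hone (Rbp_inj R he hwe he hoe h).1.symm
      · exact Rbp_not_Ae R he hwe he h
  have hge := AHG_fge hepC hk hn (hth _ (Finset.mem_insert_self _ _))
  have heq : friendsIn G C (ep e) = S :=
    Finset.eq_of_subset_of_card_le hsub (by omega)
  exact AHG_friendsIn_subset G C (ep e) (heq ▸ Finset.mem_insert_self _ _)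

lemma Hvp_C {v : V} (hvC : vp v ∈ C) :
    k - 1 ≤ ((univ : Finset (Sym2 V)).filter
      fun e => e ∈ H.edgeSet ∧ v ∈ e ∧ bp v e ∈ C).card := by
  have hn := Hn_ge R hk hodd hΓ hB
  have hth := AHG_block_core hB hvC (Hutil_vp R hk hodd hΓ hB v)
  have hge := AHG_fge hvC hk hn (hth _ (Finset.mem_insert_self _ _))
  have hsub : friendsIn G C (vp v) ⊆ ((univ : Finset (Sym2 V)).filter
      fun e => e ∈ H.edgeSet ∧ v ∈ e ∧ bp v e ∈ C).image (fun e => bp v e) := by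
    intro y hy
    rw [friendsIn, Finset.mem_filter] at hy
    obtain ⟨hyC, hadj⟩ := hy
    rcases adj_vp_mem R hadj with hP | ⟨e, he, hve, rfl⟩
    · exact absurd hyC (HnoPlain_v R hk hodd hΓ hB v y hP hadj.ne')
    · exact Finset.mem_image.mpr ⟨e, Finset.mem_filter.mpr
        ⟨Finset.mem_univ _, he, hve, hyC⟩, rfl⟩
  calc k - 1 ≤ (friendsIn G C (vp v)).card := hge
    _ ≤ _ := (Finset.card_le_card hsub).trans Finset.card_image_le

lemma Hdummy_C {e : Sym2 V} {a : N} (he : e ∈ H.edgeSet) (ha : a ∈ Ae e)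
    (haC : a ∈ C) : ep e ∈ C ∨ ∃ w ∈ e, bp w e ∈ C := by
  have hu : utilMinEQ G (Γ.part a) a
      = (Fintype.card N : ℤ) * (((Ae e).card : ℤ) - 1) := by
    rw [hΓ.2.2.2 e he a ha]
    exact AHG_clique_util (R.Ae_clique e he) ha
  have hth := AHG_block_core hB haC hu _ (Finset.mem_insert_self _ _)
  rw [AHG_fval_eq G C a haC] at hth
  have hF1 := AHG_friends_card_le G C a haC
  have hnn0 : (0 : ℤ) < (Fintype.card N : ℤ) := by
    have : 0 < Fintype.card N := Fintype.card_pos_iff.mpr ⟨a⟩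
    exact_mod_cast this
  have e0 : ((Fintype.card N : ℤ) + 1) * ((friendsIn G C a).card : ℤ)
      = (Fintype.card N : ℤ) * ((friendsIn G C a).card : ℤ)
        + ((friendsIn G C a).card : ℤ) := by ring
  have hF1' : ((friendsIn G C a).card : ℤ) + 1 ≤ (C.card : ℤ) := by omega
  have hmul : (Fintype.card N : ℤ) * (((Ae e).card : ℤ) - 1)
      < (Fintype.card N : ℤ) * ((friendsIn G C a).card : ℤ) := by linarith
  have hAF : ((Ae e).card : ℤ) - 1 < ((friendsIn G C a).card : ℤ) :=
    lt_of_mul_lt_mul_left hmul (le_of_lt hnn0)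
  have hAFn : (Ae e).card ≤ (friendsIn G C a).card := by omega
  by_contra hcon
  push_neg at hcon
  have hsub : friendsIn G C a ⊆ (Ae e).erase a := by
    intro y hy
    rw [friendsIn, Finset.mem_filter] at hy
    obtain ⟨hyC, hadj⟩ := hy
    rcases adj_Ae_mem R he ha hadj with hA | rfl | ⟨w, hw, rfl⟩
    · exact Finset.mem_erase.mpr ⟨hadj.ne', hA⟩
    · exact absurd hyC hcon.1
    · exact absurd hyC (hcon.2 w hw)
  have hle := Finset.card_le_card hsub
  rw [Finset.card_erase_of_mem ha] at hle
  have hA1 : 1 ≤ (Ae e).card := Finset.card_pos.mpr ⟨a, ha⟩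
  omega

lemma Hexists_bp : ∃ v, ∃ e ∈ H.edgeSet, v ∈ e ∧ bp v e ∈ C := by
  obtain ⟨x, hx⟩ := hB.1
  have hbp_of_ep : ∀ e ∈ H.edgeSet, ep e ∈ C → ∃ v, ∃ e' ∈ H.edgeSet, v ∈ e' ∧ bp v e' ∈ C := by
    intro e he hepC
    exact ⟨e.out.1, e, he, Sym2.out_fst_mem e,
      Hep_C R hk hodd hΓ hB he hepC e.out.1 (Sym2.out_fst_mem e)⟩
  rcases R.cover x with ⟨v, hxv⟩ | ⟨e, he, hxe⟩ | ⟨v, e, he, hve, hxe⟩ | ⟨e, he, hxe⟩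
  · have hx' : x = vp v := by
      by_contra hne
      exact HnoPlain_v R hk hodd hΓ hB v x hxv hne hx
    subst hx'
    have hge := Hvp_C R hk hodd hΓ hB hx
    have hpos : 0 < ((univ : Finset (Sym2 V)).filter
        fun e => e ∈ H.edgeSet ∧ v ∈ e ∧ bp v e ∈ C).card := by omega
    obtain ⟨e, hef⟩ := Finset.card_pos.mp hpos
    obtain ⟨-, he, hve, hbC⟩ := Finset.mem_filter.mp hef
    exact ⟨v, e, he, hve, hbC⟩
  · have hx' : x = ep e := by
      by_contra hne
      exact HnoPlain_e R hk hodd hΓ hB e he x hxe hne hx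
    subst hx'
    exact hbp_of_ep e he hx
  · have hx' : x = bp v e := by
      by_contra hne
      exact HnoPlain_ve R hk hodd hΓ hB v e he hve x hxe hne hx
    subst hx'
    exact ⟨v, e, he, hve, hx⟩
  · rcases Hdummy_C R hk hodd hΓ hB he hxe hx with h | ⟨w, hw, hbC⟩
    · exact hbp_of_ep e he h
    · exact ⟨w, e, he, hw, hbC⟩

end HardDir

section Forward
variable {V N : Type*} [Fintype V] [DecidableEq V] [Fintype N] [DecidableEq N]
variable {H : SimpleGraph V} {k : ℕ} {G : SimpleGraph N}
variable {Pv : V → Finset N} {Pe : Sym2 V → Finset N} {Pve : V → Sym2 V → Finset N}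
variable {Ae : Sym2 V → Finset N} {vp : V → N} {ep : Sym2 V → N} {bp : V → Sym2 V → N}
variable {Γ : CoalitionStructure N} {C : Finset N}
variable (R : MinReduction H k G Pv Pe Pve Ae vp ep bp)
variable (hk : 3 ≤ k) (hodd : Odd k) (hΓ : IsMinGamma H Pv Pe Pve Ae Γ)
variable (hB : Blocks (utilMinEQ G) Γ C)
include R hk hodd hΓ hB

lemma Hforward : ∃ K : Finset V, H.IsNClique k K := by
  classical
  obtain ⟨d, hd⟩ : ∃ d, k = 2 * d + 1 := by obtain ⟨m, hm⟩ := hodd; exact ⟨m, by omega⟩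
  have hd1 : 1 ≤ d := by omega
  set K : Finset V := univ.filter (fun v => vp v ∈ C) with hK
  set Ec : Finset (Sym2 V) := univ.filter (fun e => e ∈ H.edgeSet ∧ ep e ∈ C) with hEc
  have hKmem : ∀ v, v ∈ K ↔ vp v ∈ C := by intro v; rw [hK]; simp
  have hEcmem : ∀ e, e ∈ Ec ↔ e ∈ H.edgeSet ∧ ep e ∈ C := by intro e; rw [hEc]; simp
  have hEc_bp : ∀ e ∈ Ec, ∀ w ∈ e, bp w e ∈ C := by
    intro e heEc w hwe
    obtain ⟨he, hepC⟩ := (hEcmem e).mp heEc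
    exact Hep_C R hk hodd hΓ hB he hepC w hwe
  have hEc_vpK : ∀ e ∈ Ec, ∀ w ∈ e, w ∈ K := by
    intro e heEc w hwe
    obtain ⟨he, hepC⟩ := (hEcmem e).mp heEc
    exact (hKmem w).mpr (Hbp_C R hk hodd hΓ hB he hwe (hEc_bp e heEc w hwe)).1
  have hEc_Ae : ∀ e ∈ Ec, ∀ a ∈ Ae e, a ∈ C := by
    intro e heEc a ha
    obtain ⟨he, hepC⟩ := (hEcmem e).mp heEc
    have hw : e.out.1 ∈ e := Sym2.out_fst_mem e
    exact (Hbp_C R hk hodd hΓ hB he hw (hEc_bp e heEc _ hw)).2.2.1 a ha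
  obtain ⟨v1, e1, he1, hv1e1, hb1⟩ := Hexists_bp R hk hodd hΓ hB
  have hCcard : C.card ≤ minK' k - 1 := (Hbp_C R hk hodd hΓ hB he1 hv1e1 hb1).2.2.2
  have hv1K : v1 ∈ K := (hKmem v1).mpr (Hbp_C R hk hodd hΓ hB he1 hv1e1 hb1).1
  -- the witness set W inside C
  set inner : Sym2 V → Finset N := fun e =>
    insert (ep e) (((univ.filter (· ∈ e)).image fun w => bp w e) ∪ Ae e) with hinner
  have hinner_shape : ∀ e, ∀ z ∈ inner e,
      z = ep e ∨ (∃ w ∈ e, z = bp w e) ∨ z ∈ Ae e := by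
    intro e z hz
    rw [hinner] at hz
    simp only [Finset.mem_insert, Finset.mem_union, Finset.mem_image,
      Finset.mem_filter, Finset.mem_univ, true_and] at hz
    rcases hz with h | ⟨w, hw, rfl⟩ | h
    · exact Or.inl h
    · exact Or.inr (Or.inl ⟨w, hw, rfl⟩)
    · exact Or.inr (Or.inr h)
  have hinner_card : ∀ e ∈ Ec, (inner e).card = k := by
    intro e heEc
    obtain ⟨he, -⟩ := (hEcmem e).mp heEc
    have hnd : ¬ e.IsDiag := H.not_isDiag_of_mem_edgeSet he
    have himcard : ((univ.filter (· ∈ e)).image fun w => bp w e).card = 2 := by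
      rw [Finset.card_image_of_injOn, AHG_endpts_card hnd]
      intro w1 hw1 w2 hw2 h
      simp only [Finset.coe_filter, Set.mem_setOf_eq] at hw1 hw2
      exact (Rbp_inj R he hw1.2 he hw2.2 h).1
    have hdisj : Disjoint ((univ.filter (· ∈ e)).image fun w => bp w e) (Ae e) := by
      rw [Finset.disjoint_left]
      rintro z hz hzA
      obtain ⟨w, hw, rfl⟩ := Finset.mem_image.mp hz
      rw [Finset.mem_filter] at hw
      exact Rbp_not_Ae R he hw.2 he hzA
    have hepnot : ep e ∉ ((univ.filter (· ∈ e)).image fun w => bp w e) ∪ Ae e := by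
      rw [Finset.mem_union]
      rintro (hz | hz)
      · obtain ⟨w, hw, h⟩ := Finset.mem_image.mp hz
        rw [Finset.mem_filter] at hw
        exact Rep_ne_bp R he he hw.2 h.symm
      · exact Rep_not_Ae R he he hz
    rw [hinner, Finset.card_insert_of_notMem hepnot,
      Finset.card_union_of_disjoint hdisj, himcard, R.Ae_card e he]
    omega
  have hinner_sub : ∀ e ∈ Ec, inner e ⊆ C := by
    intro e heEc z hz
    obtain ⟨he, hepC⟩ := (hEcmem e).mp heEc
    rcases hinner_shape e z hz with rfl | ⟨w, hw, rfl⟩ | h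
    · exact hepC
    · exact hEc_bp e heEc w hw
    · exact hEc_Ae e heEc z h
  have hinner_disj : ∀ e ∈ Ec, ∀ f ∈ Ec, e ≠ f → Disjoint (inner e) (inner f) := by
    intro e heEc f hfEc hne
    obtain ⟨he, -⟩ := (hEcmem e).mp heEc
    obtain ⟨hf, -⟩ := (hEcmem f).mp hfEc
    rw [Finset.disjoint_left]
    intro z hze hzf
    rcases hinner_shape e z hze with rfl | ⟨w, hw, rfl⟩ | h
    · rcases hinner_shape f _ hzf with h2 | ⟨w2, hw2, h2⟩ | h2
      · exact hne (Rep_inj R he hf h2)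
      · exact Rep_ne_bp R he hf hw2 h2
      · exact Rep_not_Ae R he hf h2
    · rcases hinner_shape f _ hzf with h2 | ⟨w2, hw2, h2⟩ | h2
      · exact Rep_ne_bp R hf he hw h2.symm
      · exact hne (Rbp_inj R he hw hf hw2 h2).2
      · exact Rbp_not_Ae R he hw hf h2
    · rcases hinner_shape f _ hzf with h2 | ⟨w2, hw2, h2⟩ | h2
      · exact Rep_not_Ae R hf he (h2 ▸ h)
      · exact Rbp_not_Ae R hf hw2 he (h2 ▸ h)
      · exact hne (RAe_eq R he hf h h2)
  set W : Finset N := (K.image vp) ∪ Ec.biUnion inner with hW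
  have hWC : W ⊆ C := by
    intro z hz
    rw [hW, Finset.mem_union] at hz
    rcases hz with hz | hz
    · obtain ⟨v, hv, rfl⟩ := Finset.mem_image.mp hz
      exact (hKmem v).mp hv
    · obtain ⟨e, heEc, hze⟩ := Finset.mem_biUnion.mp hz
      exact hinner_sub e heEc hze
  have hWcard : W.card = K.card + k * Ec.card := by
    rw [hW, Finset.card_union_of_disjoint, Finset.card_image_of_injOn,
      Finset.card_biUnion hinner_disj]
    · congr 1
      rw [Finset.sum_congr rfl hinner_card, Finset.sum_const, smul_eq_mul]
      ring
    · intro v1' hv1' v2' hv2' h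
      exact Rvp_inj R h
    · rw [Finset.disjoint_left]
      intro z hz hz2
      obtain ⟨v, hv, rfl⟩ := Finset.mem_image.mp hz
      obtain ⟨e, heEc, hze⟩ := Finset.mem_biUnion.mp hz2
      obtain ⟨he, -⟩ := (hEcmem e).mp heEc
      rcases hinner_shape e _ hze with h2 | ⟨w2, hw2, h2⟩ | h2
      · exact Rvp_ne_ep R he h2
      · exact Rvp_ne_bp R he hw2 h2
      · exact Rvp_not_Ae R he h2
  have hcount : K.card + k * Ec.card ≤ minK' k - 1 := by
    rw [← hWcard]
    exact le_trans (Finset.card_le_card hWC) hCcard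
  -- handshake
  have hsum1 : K.card * (k - 1) ≤ ∑ v ∈ K,
      ((univ : Finset (Sym2 V)).filter
        fun e => e ∈ H.edgeSet ∧ v ∈ e ∧ bp v e ∈ C).card := by
    have := Finset.card_nsmul_le_sum K
      (fun v => ((univ : Finset (Sym2 V)).filter
        fun e => e ∈ H.edgeSet ∧ v ∈ e ∧ bp v e ∈ C).card) (k - 1)
      (fun v hv => Hvp_C R hk hodd hΓ hB ((hKmem v).mp hv))
    rwa [smul_eq_mul] at this
  have hsum2 : ∀ v ∈ K, ((univ : Finset (Sym2 V)).filter
      fun e => e ∈ H.edgeSet ∧ v ∈ e ∧ bp v e ∈ C).card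
      ≤ (Ec.filter fun e => v ∈ e).card := by
    intro v hv
    apply Finset.card_le_card
    intro e hef
    obtain ⟨-, he, hve, hb⟩ := Finset.mem_filter.mp hef
    rw [Finset.mem_filter]
    exact ⟨(hEcmem e).mpr ⟨he, (Hbp_C R hk hodd hΓ hB he hve hb).2.1⟩, hve⟩
  have hsum3 : ∑ v ∈ K, (Ec.filter fun e => v ∈ e).card
      = ∑ e ∈ Ec, (K.filter fun v => v ∈ e).card := by
    simp only [Finset.card_filter]
    exact Finset.sum_comm
  have hsum4 : ∀ e ∈ Ec, (K.filter fun v => v ∈ e).card ≤ 2 := by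
    intro e heEc
    obtain ⟨he, -⟩ := (hEcmem e).mp heEc
    have hsub : (K.filter fun v => v ∈ e) ⊆ (univ.filter (· ∈ e)) :=
      Finset.filter_subset_filter _ (Finset.subset_univ K)
    have := Finset.card_le_card hsub
    rw [AHG_endpts_card (H.not_isDiag_of_mem_edgeSet he)] at this
    exact this
  have hhand : K.card * (k - 1) ≤ 2 * Ec.card := by
    calc K.card * (k - 1) ≤ ∑ v ∈ K, ((univ : Finset (Sym2 V)).filter
          fun e => e ∈ H.edgeSet ∧ v ∈ e ∧ bp v e ∈ C).card := hsum1
      _ ≤ ∑ v ∈ K, (Ec.filter fun e => v ∈ e).card := Finset.sum_le_sum hsum2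
      _ = ∑ e ∈ Ec, (K.filter fun v => v ∈ e).card := hsum3
      _ ≤ Ec.card * 2 := by
          have := Finset.sum_le_card_nsmul Ec
            (fun e => (K.filter fun v => v ∈ e).card) 2 hsum4
          rwa [smul_eq_mul] at this
      _ = 2 * Ec.card := by ring
  -- arithmetic: K.card ≤ k
  set m := K.card with hm
  set q := Ec.card with hq
  have hchoose : Nat.choose k 2 = k * d := by
    have h1 : k - 1 = 2 * d := by omega
    rw [Nat.choose_two_right, h1]
    have h2 : k * (2 * d) = 2 * (k * d) := by ring
    rw [h2]
    omega
  have hk'm : minK' k - 1 = k * (k * d) + k := by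
    unfold minK'
    rw [hchoose]
    omega
  have hmd : m * d ≤ q := by
    have h1 : 2 * (m * d) ≤ 2 * q := by
      have e1 : m * (k - 1) = 2 * (m * d) := by
        have : k - 1 = 2 * d := by omega
        rw [this]; ring
      omega
    omega
  have hmk : m ≤ k := by
    have h3 : m + k * (m * d) ≤ m + k * q :=
      Nat.add_le_add_left (Nat.mul_le_mul_left k hmd) m
    have h4 : m * (k * d + 1) ≤ k * (k * d + 1) := by
      have e1 : m * (k * d + 1) = m + k * (m * d) := by ring
      have e2 : k * (k * d + 1) = k * (k * d) + k := by ring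
      rw [e1, e2]
      calc m + k * (m * d) ≤ m + k * q := h3
        _ ≤ minK' k - 1 := hcount
        _ = k * (k * d) + k := hk'm
    exact Nat.le_of_mul_le_mul_right h4 (by omega)
  -- injection from Sv v into K.erase v
  have hKerase : ∀ v ∈ K, k - 1 ≤ (K.erase v).card ∧
      (∀ w ∈ K.erase v, (K.erase v).card ≤ k - 1 → H.Adj v w) := by
    intro v hv
    set F : Sym2 V → V := fun e => if h : v ∈ e then Sym2.Mem.other' h else v with hF
    have hmapsto : ∀ e ∈ ((univ : Finset (Sym2 V)).filter
        fun e => e ∈ H.edgeSet ∧ v ∈ e ∧ bp v e ∈ C), F e ∈ K.erase v := by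
      intro e hef
      obtain ⟨-, he, hve, hb⟩ := Finset.mem_filter.mp hef
      have hFe : F e = Sym2.Mem.other' hve := by rw [hF]; exact dif_pos hve
      have hoe : Sym2.Mem.other' hve ∈ e := Sym2.other_mem' hve
      have honev : Sym2.Mem.other' hve ≠ v := by
        rw [← Sym2.other_eq_other']
        exact Sym2.other_ne (H.not_isDiag_of_mem_edgeSet he) hve
      have hepC : ep e ∈ C := (Hbp_C R hk hodd hΓ hB he hve hb).2.1
      have hbo : bp (Sym2.Mem.other' hve) e ∈ C :=
        Hep_C R hk hodd hΓ hB he hepC _ hoe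
      have hvpo : Sym2.Mem.other' hve ∈ K :=
        (hKmem _).mpr (Hbp_C R hk hodd hΓ hB he hoe hbo).1
      rw [hFe]
      exact Finset.mem_erase.mpr ⟨honev, hvpo⟩
    have hinjOn : Set.InjOn F ↑((univ : Finset (Sym2 V)).filter
        fun e => e ∈ H.edgeSet ∧ v ∈ e ∧ bp v e ∈ C) := by
      intro e1' h1 e2' h2 hFeq
      have h1' := Finset.mem_filter.mp (Finset.mem_coe.mp h1)
      have h2' := Finset.mem_filter.mp (Finset.mem_coe.mp h2)
      obtain ⟨-, he1', hve1, -⟩ := h1'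
      obtain ⟨-, he2', hve2, -⟩ := h2'
      have hF1 : F e1' = Sym2.Mem.other' hve1 := dif_pos hve1
      have hF2 : F e2' = Sym2.Mem.other' hve2 := dif_pos hve2
      have hsp1 : s(v, Sym2.Mem.other' hve1) = e1' := Sym2.other_spec' hve1
      have hsp2 : s(v, Sym2.Mem.other' hve2) = e2' := Sym2.other_spec' hve2
      rw [← hsp1, ← hsp2, ← hF1, ← hF2, hFeq]
    have hcard1 : ((univ : Finset (Sym2 V)).filter
        fun e => e ∈ H.edgeSet ∧ v ∈ e ∧ bp v e ∈ C).card ≤ (K.erase v).card :=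
      Finset.card_le_card_of_injOn F hmapsto hinjOn
    have hge := Hvp_C R hk hodd hΓ hB ((hKmem v).mp hv)
    refine ⟨le_trans hge hcard1, ?_⟩
    intro w hw hle
    have himsub : ((univ : Finset (Sym2 V)).filter
        fun e => e ∈ H.edgeSet ∧ v ∈ e ∧ bp v e ∈ C).image F ⊆ K.erase v := by
      intro z hz
      obtain ⟨e, hef, rfl⟩ := Finset.mem_image.mp hz
      exact hmapsto e hef
    have himcard : (((univ : Finset (Sym2 V)).filter
        fun e => e ∈ H.edgeSet ∧ v ∈ e ∧ bp v e ∈ C).image F).card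
        = ((univ : Finset (Sym2 V)).filter
          fun e => e ∈ H.edgeSet ∧ v ∈ e ∧ bp v e ∈ C).card :=
      Finset.card_image_of_injOn hinjOn
    have heq : ((univ : Finset (Sym2 V)).filter
        fun e => e ∈ H.edgeSet ∧ v ∈ e ∧ bp v e ∈ C).image F = K.erase v :=
      Finset.eq_of_subset_of_card_le himsub (by omega)
    rw [← heq] at hw
    obtain ⟨e, hef, hFe⟩ := Finset.mem_image.mp hw
    obtain ⟨-, he, hve, -⟩ := Finset.mem_filter.mp hef
    have hFe' : F e = Sym2.Mem.other' hve := dif_pos hve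
    have hsp : s(v, Sym2.Mem.other' hve) = e := Sym2.other_spec' hve
    rw [← SimpleGraph.mem_edgeSet]
    have hwv : s(v, w) = e := by rw [← hFe, hFe', hsp]
    rw [hwv]
    exact he
  -- conclude
  have hm1 := hKerase v1 hv1K
  have hKcard : m = k := by
    have h5 : (K.erase v1).card = m - 1 := by
      rw [Finset.card_erase_of_mem hv1K]
    have h6 := hm1.1
    omega
  refine ⟨K, ?_⟩
  rw [SimpleGraph.isNClique_iff]
  constructor
  · intro a ha b hb hne
    have haK : a ∈ K := ha
    have hbK : b ∈ K := hb
    exact (hKerase a haK).2 b (Finset.mem_erase.mpr ⟨Ne.symm hne, hbK⟩)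
      (by rw [Finset.card_erase_of_mem haK]; omega)
  · exact hKcard

end Forward

section Backward
variable {V N : Type*} [Fintype V] [DecidableEq V] [Fintype N] [DecidableEq N]
variable {H : SimpleGraph V} {k : ℕ} {G : SimpleGraph N}
variable {Pv : V → Finset N} {Pe : Sym2 V → Finset N} {Pve : V → Sym2 V → Finset N}
variable {Ae : Sym2 V → Finset N} {vp : V → N} {ep : Sym2 V → N} {bp : V → Sym2 V → N}
variable {Γ : CoalitionStructure N} {K : Finset V}
variable (R : MinReduction H k G Pv Pe Pve Ae vp ep bp)
variable (hk : 3 ≤ k) (hodd : Odd k) (hΓ : IsMinGamma H Pv Pe Pve Ae Γ)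
variable (hK : H.IsNClique k K)
include R hk hodd hΓ hK

lemma Hbackward : ∃ C : Finset N, Blocks (utilMinEQ G) Γ C := by
  classical
  obtain ⟨d, hd⟩ : ∃ d, k = 2 * d + 1 := by obtain ⟨m, hm⟩ := hodd; exact ⟨m, by omega⟩
  have hd1 : 1 ≤ d := by omega
  have hKcl := hK.1
  have hKcard := hK.2
  set EK : Finset (Sym2 V) := univ.filter
    (fun e => e ∈ H.edgeSet ∧ ∀ w ∈ e, w ∈ K) with hEK
  have hEKmem : ∀ e, e ∈ EK ↔ e ∈ H.edgeSet ∧ ∀ w ∈ e, w ∈ K := by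
    intro e; rw [hEK]; simp
  have hedge : ∀ v ∈ K, ∀ w ∈ K, v ≠ w → s(v, w) ∈ EK := by
    intro v hv w hw hne
    rw [hEKmem]
    refine ⟨H.mem_edgeSet.mpr (hKcl hv hw hne), ?_⟩
    intro u hu
    rcases Sym2.mem_iff.mp hu with rfl | rfl
    · exact hv
    · exact hw
  set inner : Sym2 V → Finset N := fun e =>
    insert (ep e) (((univ.filter (· ∈ e)).image fun w => bp w e) ∪ Ae e) with hinner
  set C : Finset N := (K.image vp) ∪ EK.biUnion inner with hC
  -- membership forms
  have hmem_vp : ∀ v ∈ K, vp v ∈ C := by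
    intro v hv
    rw [hC, Finset.mem_union]
    exact Or.inl (Finset.mem_image.mpr ⟨v, hv, rfl⟩)
  have hmem_ep : ∀ e ∈ EK, ep e ∈ C := by
    intro e he
    rw [hC, Finset.mem_union]
    exact Or.inr (Finset.mem_biUnion.mpr ⟨e, he, by rw [hinner]; exact Finset.mem_insert_self _ _⟩)
  have hmem_bp : ∀ e ∈ EK, ∀ w ∈ e, bp w e ∈ C := by
    intro e he w hw
    rw [hC, Finset.mem_union]
    refine Or.inr (Finset.mem_biUnion.mpr ⟨e, he, ?_⟩)
    rw [hinner]
    exact Finset.mem_insert_of_mem (Finset.mem_union_left _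
      (Finset.mem_image.mpr ⟨w, Finset.mem_filter.mpr ⟨Finset.mem_univ _, hw⟩, rfl⟩))
  have hmem_Ae : ∀ e ∈ EK, ∀ a ∈ Ae e, a ∈ C := by
    intro e he a ha
    rw [hC, Finset.mem_union]
    refine Or.inr (Finset.mem_biUnion.mpr ⟨e, he, ?_⟩)
    rw [hinner]
    exact Finset.mem_insert_of_mem (Finset.mem_union_right _ ha)
  have hCshape : ∀ z ∈ C, (∃ v ∈ K, z = vp v) ∨ ∃ e ∈ EK,
      (z = ep e ∨ (∃ w ∈ e, z = bp w e) ∨ z ∈ Ae e) := by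
    intro z hz
    rw [hC, Finset.mem_union] at hz
    rcases hz with hz | hz
    · obtain ⟨v, hv, rfl⟩ := Finset.mem_image.mp hz
      exact Or.inl ⟨v, hv, rfl⟩
    · obtain ⟨e, he, hze⟩ := Finset.mem_biUnion.mp hz
      rw [hinner] at hze
      simp only [Finset.mem_insert, Finset.mem_union, Finset.mem_image,
        Finset.mem_filter, Finset.mem_univ, true_and] at hze
      rcases hze with h | ⟨w, hw, rfl⟩ | h
      · exact Or.inr ⟨e, he, Or.inl h⟩
      · exact Or.inr ⟨e, he, Or.inr (Or.inl ⟨w, hw, rfl⟩)⟩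
      · exact Or.inr ⟨e, he, Or.inr (Or.inr h)⟩
  -- cardinality of C
  have hinner_card : ∀ e ∈ EK, (inner e).card ≤ k := by
    intro e heEK
    obtain ⟨he, -⟩ := (hEKmem e).mp heEK
    have hnd : ¬ e.IsDiag := H.not_isDiag_of_mem_edgeSet he
    have h1 : (inner e).card ≤ 1 + (((univ.filter (· ∈ e)).image fun w => bp w e).card
        + (Ae e).card) := by
      have ha := Finset.card_insert_le (ep e)
        (((univ.filter (· ∈ e)).image fun w => bp w e) ∪ Ae e)
      have hb := Finset.card_union_le ((univ.filter (· ∈ e)).image fun w => bp w e) (Ae e)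
      simp only [hinner]
      omega
    have h2 : ((univ.filter (· ∈ e)).image fun w => bp w e).card ≤ 2 := by
      have h3 := Finset.card_image_le (s := (univ : Finset V).filter (· ∈ e))
        (f := fun w => bp w e)
      rw [AHG_endpts_card hnd] at h3
      exact h3
    rw [R.Ae_card e he] at h1
    omega
  have hEKcard : EK.card ≤ k * d := by
    have hsub : EK ⊆ K.sym2 \ (K.image fun x => s(x, x)) := by
      intro e heEK
      obtain ⟨he, hall⟩ := (hEKmem e).mp heEK
      rw [Finset.mem_sdiff]
      constructor
      · exact Finset.mem_sym2_iff.mpr hall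
      · intro hmem
        obtain ⟨x, -, rfl⟩ := Finset.mem_image.mp hmem
        exact (H.not_isDiag_of_mem_edgeSet he) (Sym2.mk_isDiag_iff.mpr rfl)
    have hdsub : (K.image fun x => s(x, x)) ⊆ K.sym2 := by
      intro z hz
      obtain ⟨x, hx, rfl⟩ := Finset.mem_image.mp hz
      rw [Finset.mem_sym2_iff]
      intro a ha
      rcases Sym2.mem_iff.mp ha with rfl | rfl <;> exact hx
    have hdcard : (K.image fun x => s(x, x)).card = k := by
      rw [Finset.card_image_of_injOn, hKcard]
      intro x1 h1 x2 h2 h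
      have h' : s(x1, x1) = s(x2, x2) := h
      rcases Sym2.eq_iff.mp h' with ⟨h3, -⟩ | ⟨h3, -⟩ <;> exact h3
    have hscard : (K.sym2).card = (k + 1).choose 2 := by
      rw [Finset.card_sym2, hKcard]
    have := Finset.card_le_card hsub
    rw [Finset.card_sdiff_of_subset hdsub, hscard, hdcard] at this
    have hch : (k + 1).choose 2 = k * d + k := by
      rw [Nat.choose_two_right]
      have e1 : (k + 1) * (k + 1 - 1) = 2 * (k * d + k) := by
        have e3 : k + 1 - 1 = k := by omega
        rw [e3, hd]; ring
      rw [e1]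
      omega
    omega
  have hCcard : C.card ≤ minK' k - 1 := by
    have h1 : C.card ≤ K.card * 1 + ∑ e ∈ EK, (inner e).card := by
      rw [hC]
      refine le_trans (Finset.card_union_le _ _) ?_
      refine Nat.add_le_add ?_ ?_
      · rw [Nat.mul_one]; exact Finset.card_image_le
      · exact Finset.card_biUnion_le
    have h2 : ∑ e ∈ EK, (inner e).card ≤ EK.card * k := by
      have := Finset.sum_le_card_nsmul EK (fun e => (inner e).card) k hinner_card
      rwa [smul_eq_mul] at this
    have h3 : EK.card * k ≤ (k * d) * k := Nat.mul_le_mul_right k hEKcard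
    have hk'm : minK' k - 1 = k * (k * d) + k := by
      unfold minK'
      have hch : Nat.choose k 2 = k * d := by
        have h1' : k - 1 = 2 * d := by omega
        rw [Nat.choose_two_right, h1']
        have h2' : k * (2 * d) = 2 * (k * d) := by ring
        rw [h2']
        omega
      rw [hch]
      omega
    rw [hKcard, hk'm] at *
    have e4 : k * d * k = k * (k * d) := by ring
    omega
  -- friend counts
  have hfc : ∀ i ∈ C, k - 1 ≤ (friendsIn G C i).card := by
    intro i hi
    rcases hCshape i hi with ⟨v, hv, rfl⟩ | ⟨e, heEK, hcase⟩
    · -- vp v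
      set S := (K.erase v).image (fun w => bp v s(v, w)) with hS
      have hScard : S.card = k - 1 := by
        rw [hS, Finset.card_image_of_injOn, Finset.card_erase_of_mem hv, hKcard]
        intro w1 h1 w2 h2 h
        have hw1 : w1 ∈ K.erase v := h1
        have hw2 : w2 ∈ K.erase v := h2
        obtain ⟨hne1, hK1⟩ := Finset.mem_erase.mp hw1
        obtain ⟨hne2, hK2⟩ := Finset.mem_erase.mp hw2
        have he1 : s(v, w1) ∈ H.edgeSet :=
          ((hEKmem _).mp (hedge v hv w1 hK1 (fun hh => hne1 hh.symm))).1
        have he2 : s(v, w2) ∈ H.edgeSet :=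
          ((hEKmem _).mp (hedge v hv w2 hK2 (fun hh => hne2 hh.symm))).1
        have := (Rbp_inj R he1 (Sym2.mem_mk_left v w1) he2 (Sym2.mem_mk_left v w2) h).2
        exact Sym2.congr_right.mp this
      have hsub : S ⊆ friendsIn G C (vp v) := by
        intro z hz
        rw [hS] at hz
        obtain ⟨w, hw, rfl⟩ := Finset.mem_image.mp hz
        obtain ⟨hne, hwK⟩ := Finset.mem_erase.mp hw
        have heEK : s(v, w) ∈ EK := hedge v hv w hwK (fun hh => hne hh.symm)
        have he : s(v, w) ∈ H.edgeSet := ((hEKmem _).mp heEK).1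
        rw [friendsIn, Finset.mem_filter]
        refine ⟨hmem_bp _ heEK v (Sym2.mem_mk_left v w), ?_⟩
        exact (R.adj_bv v (s(v, w)) he (Sym2.mem_mk_left v w)).symm
      calc k - 1 = S.card := hScard.symm
        _ ≤ _ := Finset.card_le_card hsub
    · obtain ⟨he, hall⟩ := (hEKmem e).mp heEK
      have hnd : ¬ e.IsDiag := H.not_isDiag_of_mem_edgeSet he
      rcases hcase with rfl | ⟨w, hwe, rfl⟩ | hA
      · -- ep e
        set S := ((univ.filter (· ∈ e)).image fun w => bp w e) ∪ Ae e with hS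
        have himcard : ((univ.filter (· ∈ e)).image fun w => bp w e).card = 2 := by
          rw [Finset.card_image_of_injOn, AHG_endpts_card hnd]
          intro w1 h1 w2 h2 h
          simp only [Finset.coe_filter, Set.mem_setOf_eq] at h1 h2
          exact (Rbp_inj R he h1.2 he h2.2 h).1
        have hdisj : Disjoint ((univ.filter (· ∈ e)).image fun w => bp w e) (Ae e) := by
          rw [Finset.disjoint_left]
          rintro z hz hzA
          obtain ⟨w, hw, rfl⟩ := Finset.mem_image.mp hz
          rw [Finset.mem_filter] at hw
          exact Rbp_not_Ae R he hw.2 he hzA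
        have hScard : S.card = k - 1 := by
          rw [hS, Finset.card_union_of_disjoint hdisj, himcard, R.Ae_card e he]
          omega
        have hsub : S ⊆ friendsIn G C (ep e) := by
          intro z hz
          rw [hS, Finset.mem_union] at hz
          rw [friendsIn, Finset.mem_filter]
          rcases hz with hz | hz
          · obtain ⟨w, hw, rfl⟩ := Finset.mem_image.mp hz
            rw [Finset.mem_filter] at hw
            exact ⟨hmem_bp e heEK w hw.2, (R.adj_be w e he hw.2).symm⟩
          · exact ⟨hmem_Ae e heEK z hz, (R.adj_ae e he z hz).symm⟩
        calc k - 1 = S.card := hScard.symm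
          _ ≤ _ := Finset.card_le_card hsub
      · -- bp w e
        set S := insert (vp w) (insert (ep e) (Ae e)) with hS
        have hScard : S.card = k - 1 := by
          rw [hS, Finset.card_insert_of_notMem, Finset.card_insert_of_notMem
            (Rep_not_Ae R he he), R.Ae_card e he]
          · omega
          · intro hmem
            rcases Finset.mem_insert.mp hmem with h | h
            · exact Rvp_ne_ep R he h
            · exact Rvp_not_Ae R he h
        have hsub : S ⊆ friendsIn G C (bp w e) := by
          intro z hz
          rw [hS] at hz
          rw [friendsIn, Finset.mem_filter]
          rcases Finset.mem_insert.mp hz with rfl | hz2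
          · exact ⟨hmem_vp w (hall w hwe), R.adj_bv w e he hwe⟩
          · rcases Finset.mem_insert.mp hz2 with rfl | hz3
            · exact ⟨hmem_ep e heEK, R.adj_be w e he hwe⟩
            · exact ⟨hmem_Ae e heEK z hz3, (R.adj_ab w e he hwe z hz3).symm⟩
        calc k - 1 = S.card := hScard.symm
          _ ≤ _ := Finset.card_le_card hsub
      · -- dummy
        have hk4 : 4 ≤ k := by
          have h1 : 1 ≤ (Ae e).card := Finset.card_pos.mpr ⟨i, hA⟩
          rw [R.Ae_card e he] at h1
          omega
        set S := insert (ep e) (((univ.filter (· ∈ e)).image fun w => bp w e)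
          ∪ (Ae e).erase i) with hS
        have himcard : ((univ.filter (· ∈ e)).image fun w => bp w e).card = 2 := by
          rw [Finset.card_image_of_injOn, AHG_endpts_card hnd]
          intro w1 h1 w2 h2 h
          simp only [Finset.coe_filter, Set.mem_setOf_eq] at h1 h2
          exact (Rbp_inj R he h1.2 he h2.2 h).1
        have hdisj : Disjoint ((univ.filter (· ∈ e)).image fun w => bp w e)
            ((Ae e).erase i) := by
          rw [Finset.disjoint_left]
          rintro z hz hzA
          obtain ⟨w, hw, rfl⟩ := Finset.mem_image.mp hz
          rw [Finset.mem_filter] at hw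
          exact Rbp_not_Ae R he hw.2 he (Finset.mem_of_mem_erase hzA)
        have hepnot : ep e ∉ ((univ.filter (· ∈ e)).image fun w => bp w e)
            ∪ (Ae e).erase i := by
          rw [Finset.mem_union]
          rintro (hz | hz)
          · obtain ⟨w, hw, h⟩ := Finset.mem_image.mp hz
            rw [Finset.mem_filter] at hw
            exact Rep_ne_bp R he he hw.2 h.symm
          · exact Rep_not_Ae R he he (Finset.mem_of_mem_erase hz)
        have hScard : S.card = k - 1 := by
          rw [hS, Finset.card_insert_of_notMem hepnot,
            Finset.card_union_of_disjoint hdisj, himcard,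
            Finset.card_erase_of_mem hA, R.Ae_card e he]
          omega
        have hsub : S ⊆ friendsIn G C i := by
          intro z hz
          rw [hS] at hz
          rw [friendsIn, Finset.mem_filter]
          rcases Finset.mem_insert.mp hz with rfl | hz2
          · exact ⟨hmem_ep e heEK, R.adj_ae e he i hA⟩
          · rw [Finset.mem_union] at hz2
            rcases hz2 with hz3 | hz3
            · obtain ⟨w, hw, rfl⟩ := Finset.mem_image.mp hz3
              rw [Finset.mem_filter] at hw
              exact ⟨hmem_bp e heEK w hw.2, R.adj_ab w e he hw.2 i hA⟩
            · obtain ⟨hne, hzA⟩ := Finset.mem_erase.mp hz3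
              exact ⟨hmem_Ae e heEK z hzA,
                R.Ae_clique e he i hA z hzA (fun h => hne h.symm)⟩
        calc k - 1 = S.card := hScard.symm
          _ ≤ _ := Finset.card_le_card hsub
  -- the lower bound for utilMinEQ on C
  have hCsub : ∀ i ∈ C, ∀ c ∈ insert i (friendsIn G C i), c ∈ C := by
    intro i hi c hc
    rcases Finset.mem_insert.mp hc with rfl | hc2
    · exact hi
    · exact AHG_friendsIn_subset G C i hc2
  have hfvlb : ∀ c ∈ C,
      ((Fintype.card N : ℤ) + 1) * ((k : ℤ) - 1) - ((C.card : ℤ) - 1) ≤ fval G C c := by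
    intro c hc
    rw [AHG_fval_eq G C c hc]
    have h1 := hfc c hc
    have h2 : (k : ℤ) - 1 ≤ ((friendsIn G C c).card : ℤ) := by omega
    have h3 : ((Fintype.card N : ℤ) + 1) * ((k : ℤ) - 1)
        ≤ ((Fintype.card N : ℤ) + 1) * ((friendsIn G C c).card : ℤ) :=
      mul_le_mul_of_nonneg_left h2 (by positivity)
    linarith
  have hulb : ∀ i ∈ C,
      ((Fintype.card N : ℤ) + 1) * ((k : ℤ) - 1) - ((C.card : ℤ) - 1)
        ≤ utilMinEQ G C i := by
    intro i hi
    exact Finset.le_inf' _ _ (fun c hc => hfvlb c (hCsub i hi c hc))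
  -- nonempty
  have hKne : K.Nonempty := by
    rw [← Finset.card_pos, hKcard]; omega
  obtain ⟨v0, hv0⟩ := hKne
  refine ⟨C, ⟨vp v0, hmem_vp v0 hv0⟩, ?_⟩
  -- blocking inequality
  intro i hi
  have hcard1 : (C.card : ℤ) - 1 < (minK' k : ℤ) - 1 := by
    have h1 := AHG_minK'_pos (k := k)
    omega
  have hgadget : ∀ (P : Finset N), IsCirculantGadget G (k - 1) (minK' k) P →
      Γ.part i = P → i ∈ P → utilMinEQ G (Γ.part i) i < utilMinEQ G C i := by
    intro P hP hpart hiP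
    rw [hpart, AHG_gadget_util hk hodd AHG_minK'_ge hP hiP]
    calc ((Fintype.card N : ℤ) + 1) * ((k : ℤ) - 1) - ((minK' k : ℤ) - 1)
        < ((Fintype.card N : ℤ) + 1) * ((k : ℤ) - 1) - ((C.card : ℤ) - 1) := by linarith
      _ ≤ utilMinEQ G C i := hulb i hi
  rcases hCshape i hi with ⟨v, hv, rfl⟩ | ⟨e, heEK, hcase⟩
  · exact hgadget (Pv v) (R.circ_v v) (hΓ.1 v _ (R.vp_mem v)) (R.vp_mem v)
  · obtain ⟨he, hall⟩ := (hEKmem e).mp heEK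
    rcases hcase with rfl | ⟨w, hwe, rfl⟩ | hA
    · exact hgadget (Pe e) (R.circ_e e he) (hΓ.2.1 e he _ (R.ep_mem e he)) (R.ep_mem e he)
    · exact hgadget (Pve w e) (R.circ_ve w e he hwe)
        (hΓ.2.2.1 w e he hwe _ (R.bp_mem w e he hwe)) (R.bp_mem w e he hwe)
    · -- dummy
      have hk4 : 4 ≤ k := by
        have h1 : 1 ≤ (Ae e).card := Finset.card_pos.mpr ⟨i, hA⟩
        rw [R.Ae_card e he] at h1
        omega
      rw [hΓ.2.2.2 e he i hA, AHG_clique_util (R.Ae_clique e he) hA]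
      have hAc : ((Ae e).card : ℤ) - 1 = (k : ℤ) - 4 := by
        have := R.Ae_card e he
        omega
      rw [hAc]
      have hcle := AHG_card_C_le (N := N) (C := C)
      have e1 : ((Fintype.card N : ℤ) + 1) * ((k : ℤ) - 1)
          = (Fintype.card N : ℤ) * ((k : ℤ) - 4) + 3 * (Fintype.card N : ℤ)
            + ((k : ℤ) - 1) := by ring
      have hkc : (4 : ℤ) ≤ (k : ℤ) := by exact_mod_cast hk4
      calc (Fintype.card N : ℤ) * ((k : ℤ) - 4)
          < ((Fintype.card N : ℤ) + 1) * ((k : ℤ) - 1) - ((C.card : ℤ) - 1) := by linarith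
        _ ≤ utilMinEQ G C i := hulb i hi

end Backward

/-- In the min-based reduction instance built from a graph `H` and an odd `k ≥ 3`,
under min-EQ utilities, the coalition structure `Γ` is not core-stable iff `H`
contains a clique of size `k`. -/
theorem minEQ_not_coreStable_iff_clique {V N : Type*} [Fintype V] [DecidableEq V]
    [Fintype N] [DecidableEq N]
    (H : SimpleGraph V) (k : ℕ) (hk : 3 ≤ k) (hodd : Odd k)
    (G : SimpleGraph N) (Pv : V → Finset N) (Pe : Sym2 V → Finset N)
    (Pve : V → Sym2 V → Finset N) (Ae : Sym2 V → Finset N)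
    (vp : V → N) (ep : Sym2 V → N) (bp : V → Sym2 V → N)
    (R : MinReduction H k G Pv Pe Pve Ae vp ep bp)
    (Γ : CoalitionStructure N) (hΓ : IsMinGamma H Pv Pe Pve Ae Γ) :
    ¬ CoreStable (utilMinEQ G) Γ ↔ ∃ K : Finset V, H.IsNClique k K := by
  constructor
  · intro h
    have h2 : ∃ C : Finset N, Blocks (utilMinEQ G) Γ C := not_not.mp h
    obtain ⟨C, hB⟩ := h2
    exact Hforward R hk hodd hΓ hB
  · rintro ⟨K, hK⟩
    intro hcs
    exact hcs (Hbackward R hk hodd hΓ hK)
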